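/- arXiv:1410.1968 — 2 statements merged into one kernel-verified Lean document; each statement's English description precedes it below -/
import Mathlib

section
/- Suppose that W₁₃ commutes with W''₁₂. Let X be a bounded operator on H and let ξ, η, ζ ∈ H be unit vectors. Then |⟨(1⊗1⊗X) W₂₃W₁₂W''₁₂(ξ⊗η⊗ζ), W₂₃W₁₂W''₁₂(ξ⊗η⊗ζ)⟩ − ⟨Xζ, ζ⟩| ≤ 2‖X‖ ( ‖WW'*(ξ⊗ζ) − ξ⊗ζ‖ + ‖W₂₃W'₁₃*(ξ⊗η⊗ζ) − W'₁₃*(ξ⊗η⊗ζ)‖ ). -/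
noncomputable section

open scoped ComplexConjugate

local notation "⟪" x ", " y "⟫" => (inner ℂ x y : ℂ)

section Helpers

variable {E G : Type*}

/-- Two continuous maps (each additive and `σ`-homogeneous) agreeing on a set whose span is
dense agree everywhere. -/
theorem extDense [NormedAddCommGroup E] [NormedSpace ℂ E]
    [NormedAddCommGroup G] [NormedSpace ℂ G]
    {s : Set E} (hd : Dense (Submodule.span ℂ s : Set E)) (σ : ℂ → ℂ) {f g : E → G}
    (hfc : Continuous f) (hgc : Continuous g)
    (hfa : ∀ x y, f (x + y) = f x + f y) (hga : ∀ x y, g (x + y) = g x + g y)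
    (hfs : ∀ (c : ℂ) (x : E), f (c • x) = σ c • f x)
    (hgs : ∀ (c : ℂ) (x : E), g (c • x) = σ c • g x)
    (h : ∀ x ∈ s, f x = g x) : ∀ x, f x = g x := by
  have hf0 : f 0 = 0 := by
    have h0 := hfa 0 0
    rw [add_zero] at h0
    rwa [left_eq_add] at h0
  have hg0 : g 0 = 0 := by
    have h0 := hga 0 0
    rw [add_zero] at h0
    rwa [left_eq_add] at h0
  have hspan : ∀ x ∈ Submodule.span ℂ s, f x = g x := by
    intro x hx
    induction hx using Submodule.span_induction with
    | mem x hx => exact h x hx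
    | zero => rw [hf0, hg0]
    | add x y _ _ ihx ihy => rw [hfa, hga, ihx, ihy]
    | smul c x _ ih => rw [hfs, hgs, ih]
  have heq : f = g := Continuous.ext_on hd hfc hgc hspan
  intro x; rw [heq]

/-- A conjugate-linear isometric involution. -/
structure IsAConj [NormedAddCommGroup E] [NormedSpace ℂ E] (K : E → E) : Prop where
  add : ∀ x y, K (x + y) = K x + K y
  smul : ∀ (c : ℂ) (x : E), K (c • x) = (starRingEnd ℂ) c • K x
  norm : ∀ x, ‖K x‖ = ‖x‖
  inv : ∀ x, K (K x) = x

namespace IsAConj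

variable [NormedAddCommGroup E] [NormedSpace ℂ E] {K : E → E}

theorem neg (hK : IsAConj K) (x : E) : K (-x) = -K x := by
  have := hK.smul (-1) x
  simpa using this

theorem sub (hK : IsAConj K) (x y : E) : K (x - y) = K x - K y := by
  rw [sub_eq_add_neg, hK.add, hK.neg, sub_eq_add_neg]

theorem continuous (hK : IsAConj K) : Continuous K := by
  have : LipschitzWith 1 K := by
    refine LipschitzWith.of_dist_le_mul fun x y => ?_
    rw [dist_eq_norm, dist_eq_norm, ← hK.sub, hK.norm]
    simp
  exact this.continuous

end IsAConj

section ConjInner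

variable [NormedAddCommGroup E] [InnerProductSpace ℂ E] {K : E → E}

theorem IsAConj.inner_map_map (hK : IsAConj K) (x y : E) : ⟪K x, K y⟫ = ⟪y, x⟫ := by
  have hI : ∀ z, K (Complex.I • z) = -(Complex.I • K z) := by
    intro z
    rw [hK.smul]
    simp [Complex.conj_I]
  have h1 : ‖K x + K y‖ = ‖y + x‖ := by rw [← hK.add, hK.norm, add_comm]
  have h2 : ‖K x - K y‖ = ‖y - x‖ := by rw [← hK.sub, hK.norm, norm_sub_rev]
  have h3 : ‖K x - Complex.I • K y‖ = ‖y - Complex.I • x‖ := by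
    have e1 : K x - Complex.I • K y = K (x + Complex.I • y) := by
      rw [hK.add, hI, sub_eq_add_neg]
    have e2 : y - Complex.I • x = (-Complex.I) • (x + Complex.I • y) := by
      rw [smul_add, smul_smul]
      simp [sub_eq_neg_add]
    rw [e1, hK.norm, e2, norm_smul]
    simp
  have h4 : ‖K x + Complex.I • K y‖ = ‖y + Complex.I • x‖ := by
    have e1 : K x + Complex.I • K y = K (x - Complex.I • y) := by
      rw [hK.sub, hI, sub_neg_eq_add]
    have e2 : y + Complex.I • x = Complex.I • (x - Complex.I • y) := by
      rw [smul_sub, smul_smul]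
      simp [add_comm]
    rw [e1, hK.norm, e2, norm_smul]
    simp
  have hIK : (RCLike.I : ℂ) = Complex.I := rfl
  rw [inner_eq_sum_norm_sq_div_four, inner_eq_sum_norm_sq_div_four, hIK, h1, h2, h3, h4]

theorem IsAConj.inner_left (hK : IsAConj K) (x y : E) :
    ⟪K x, y⟫ = (starRingEnd ℂ) ⟪x, K y⟫ := by
  conv_lhs => rw [← hK.inv y]
  rw [hK.inner_map_map, inner_conj_symm]

theorem IsAConj.inner_right (hK : IsAConj K) (x y : E) :
    ⟪x, K y⟫ = (starRingEnd ℂ) ⟪K x, y⟫ := by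
  rw [hK.inner_left, Complex.conj_conj]

end ConjInner

section Unitary

variable [NormedAddCommGroup E] [InnerProductSpace ℂ E] [CompleteSpace E]

theorem unital_inner {A : E →L[ℂ] E} (h : star A * A = 1) (x y : E) :
    ⟪A x, A y⟫ = ⟪x, y⟫ := by
  have h1 : ⟪x, (ContinuousLinearMap.adjoint A) (A y)⟫ = ⟪A x, A y⟫ :=
    ContinuousLinearMap.adjoint_inner_right A x (A y)
  rw [← h1, ← ContinuousLinearMap.star_eq_adjoint, ← ContinuousLinearMap.mul_apply, h,
    ContinuousLinearMap.one_apply]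

theorem clm_move (A : E →L[ℂ] E) (t y : E) : ⟪A t, y⟫ = ⟪t, star A y⟫ := by
  rw [ContinuousLinearMap.star_eq_adjoint]
  exact (ContinuousLinearMap.adjoint_inner_right A t y).symm

variable {F : Type*} [NormedAddCommGroup F] [InnerProductSpace ℂ F]

theorem norm_eq_of_inner_eq {x : E} {y : F} (h : ⟪x, x⟫ = ⟪y, y⟫) : ‖x‖ = ‖y‖ := by
  rw [inner_self_eq_norm_sq_to_K, inner_self_eq_norm_sq_to_K] at h
  have h2 : ‖x‖ ^ 2 = ‖y‖ ^ 2 := by exact_mod_cast h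
  nlinarith [norm_nonneg x, norm_nonneg y]

theorem norm_eq_one_of_inner_eq {x : E} (h : ⟪x, x⟫ = 1) : ‖x‖ = 1 := by
  rw [inner_self_eq_norm_sq_to_K] at h
  have h2' : ((‖x‖ ^ 2 : ℝ) : ℂ) = ((1 : ℝ) : ℂ) := by push_cast; exact h
  have h2 : ‖x‖ ^ 2 = 1 := Complex.ofReal_inj.mp h2'
  nlinarith [norm_nonneg x]

theorem unital_norm {A : E →L[ℂ] E} (h : star A * A = 1) (x : E) : ‖A x‖ = ‖x‖ :=
  norm_eq_of_inner_eq (unital_inner h x x)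

end Unitary

end Helpers

set_option maxHeartbeats 3000000 in
theorem stmt_12
    {H H2 H3 : Type*}
    [NormedAddCommGroup H] [InnerProductSpace ℂ H] [CompleteSpace H]
    [NormedAddCommGroup H2] [InnerProductSpace ℂ H2] [CompleteSpace H2]
    [NormedAddCommGroup H3] [InnerProductSpace ℂ H3] [CompleteSpace H3]
    -- the tensor map H × H → H ⊗ H = H2
    (τ : H →L[ℂ] H →L[ℂ] H2)
    (hτinner : ∀ a b c d : H, (inner ℂ (τ a b) (τ c d) : ℂ) = (inner ℂ a c : ℂ) * (inner ℂ b d : ℂ))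
    (hτdense : Dense (Submodule.span ℂ (Set.range fun p : H × H => τ p.1 p.2) : Set H2))
    -- the tensor maps (H ⊗ H) × H → H ⊗ H ⊗ H = H3 and H × (H ⊗ H) → H ⊗ H ⊗ H
    (m : H2 →L[ℂ] H →L[ℂ] H3)
    (m' : H →L[ℂ] H2 →L[ℂ] H3)
    (hmm' : ∀ a b c : H, m (τ a b) c = m' a (τ b c))
    (hminner : ∀ (u v : H2) (c d : H), (inner ℂ (m u c) (m v d) : ℂ) = (inner ℂ u v : ℂ) * (inner ℂ c d : ℂ))
    (hmdense : Dense (Submodule.span ℂ (Set.range fun p : (H × H) × H => m (τ p.1.1 p.1.2) p.2) : Set H3))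
    -- the leg maps T ↦ T₁₂ = T ⊗ 1, T ↦ T₂₃ = 1 ⊗ T, T ↦ T₁₃ = (Σ⊗1)(1⊗T)(Σ⊗1)
    (leg12 leg23 leg13 : (H2 →L[ℂ] H2) → (H3 →L[ℂ] H3))
    (hleg12 : ∀ (T : H2 →L[ℂ] H2) (u : H2) (c : H), leg12 T (m u c) = m (T u) c)
    (hleg23 : ∀ (T : H2 →L[ℂ] H2) (a : H) (v : H2), leg23 T (m' a v) = m' a (T v))
    -- the flip unitary Σ on H ⊗ H
    (Sg : H2 →L[ℂ] H2)
    (hSg : ∀ a b : H, Sg (τ a b) = τ b a)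
    (hleg13 : ∀ T : H2 →L[ℂ] H2, leg13 T = leg12 Sg * leg23 T * leg12 Sg)
    -- the multiplicative unitary W, satisfying the pentagonal equation
    (W : H2 →L[ℂ] H2)
    (hWl : W * star W = 1) (hWr : star W * W = 1)
    (hPent : leg12 W * leg13 W * leg23 W = leg23 W * leg12 W)
    -- J : a conjugate-linear isometric involution of H
    (J : H → H)
    (hJadd : ∀ x y : H, J (x + y) = J x + J y)
    (hJsmul : ∀ (c : ℂ) (x : H), J (c • x) = (starRingEnd ℂ) c • J x)
    (hJnorm : ∀ x : H, ‖J x‖ = ‖x‖)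
    (hJinv : ∀ x : H, J (J x) = x)
    -- Jh : a conjugate-linear isometric involution of H
    (Jh : H → H)
    (hJhadd : ∀ x y : H, Jh (x + y) = Jh x + Jh y)
    (hJhsmul : ∀ (c : ℂ) (x : H), Jh (c • x) = (starRingEnd ℂ) c • Jh x)
    (hJhnorm : ∀ x : H, ‖Jh x‖ = ‖x‖)
    (hJhinv : ∀ x : H, Jh (Jh x) = x)
    -- JJ : the conjugate-linear involution J⊗J of H ⊗ H
    (JJ : H2 → H2)
    (hJJadd : ∀ x y : H2, JJ (x + y) = JJ x + JJ y)
    (hJJsmul : ∀ (c : ℂ) (x : H2), JJ (c • x) = (starRingEnd ℂ) c • JJ x)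
    (hJJnorm : ∀ x : H2, ‖JJ x‖ = ‖x‖)
    (hJJinv : ∀ x : H2, JJ (JJ x) = x)
    (hJJtmul : ∀ a b : H, JJ (τ a b) = τ (J a) (J b))
    -- JJh : the conjugate-linear involution J⊗Ĵ of H ⊗ H
    (JJh : H2 → H2)
    (hJJhadd : ∀ x y : H2, JJh (x + y) = JJh x + JJh y)
    (hJJhsmul : ∀ (c : ℂ) (x : H2), JJh (c • x) = (starRingEnd ℂ) c • JJh x)
    (hJJhnorm : ∀ x : H2, ‖JJh x‖ = ‖x‖)
    (hJJhinv : ∀ x : H2, JJh (JJh x) = x)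
    (hJJhtmul : ∀ a b : H, JJh (τ a b) = τ (J a) (Jh b))
    -- JhJ : the conjugate-linear involution Ĵ⊗J of H ⊗ H
    (JhJ : H2 → H2)
    (hJhJadd : ∀ x y : H2, JhJ (x + y) = JhJ x + JhJ y)
    (hJhJsmul : ∀ (c : ℂ) (x : H2), JhJ (c • x) = (starRingEnd ℂ) c • JhJ x)
    (hJhJnorm : ∀ x : H2, ‖JhJ x‖ = ‖x‖)
    (hJhJinv : ∀ x : H2, JhJ (JhJ x) = x)
    (hJhJtmul : ∀ a b : H, JhJ (τ a b) = τ (Jh a) (J b))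
    -- the assumption W* = (Ĵ⊗J) W (Ĵ⊗J)
    (hWstar : ∀ x : H2, (star W) x = JhJ (W (JhJ x)))
    -- W' = (J⊗J) W (J⊗J), the commutant multiplicative unitary
    (W' : H2 →L[ℂ] H2)
    (hW' : ∀ x : H2, W' x = JJ (W (JJ x)))
    -- W'' = (J⊗Ĵ) W (J⊗Ĵ) (in the quantum group setting, W'' = (W'ᵒᵖ)*)
    (W'' : H2 →L[ℂ] H2)
    (hW'' : ∀ x : H2, W'' x = JJh (W (JJh x)))
    -- the right leg map T ↦ 1 ⊗ T on H ⊗ H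
    (ρ : (H →L[ℂ] H) → (H2 →L[ℂ] H2))
    (hρ : ∀ (T : H →L[ℂ] H) (a b : H), ρ T (τ a b) = τ a (T b))
    -- W₁₃ commutes with W''₁₂
    (hcomm : Commute (leg13 W) (leg12 W''))
    -- a bounded operator X on H and unit vectors ξ, η, ζ
    (X : H →L[ℂ] H)
    (ξ η ζ : H) (hξ : ‖ξ‖ = 1) (hη : ‖η‖ = 1) (hζ : ‖ζ‖ = 1) :
    ‖(inner ℂ (leg23 (ρ X) ((leg23 W * leg12 W * leg12 W'') (m (τ ξ η) ζ)))
          ((leg23 W * leg12 W * leg12 W'') (m (τ ξ η) ζ)) : ℂ)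
        - (inner ℂ (X ζ) ζ : ℂ)‖ ≤
      2 * ‖X‖ * (‖(W * star W') (τ ξ ζ) - τ ξ ζ‖
        + ‖leg23 W (star (leg13 W') (m (τ ξ η) ζ)) - star (leg13 W') (m (τ ξ η) ζ)‖) := by

  classical
  -- conjugation bundles
  have cJ : IsAConj J := ⟨hJadd, hJsmul, hJnorm, hJinv⟩
  have cJh : IsAConj Jh := ⟨hJhadd, hJhsmul, hJhnorm, hJhinv⟩
  have cJJ : IsAConj JJ := ⟨hJJadd, hJJsmul, hJJnorm, hJJinv⟩
  have cJJh : IsAConj JJh := ⟨hJJhadd, hJJhsmul, hJJhnorm, hJJhinv⟩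
  have cJhJ : IsAConj JhJ := ⟨hJhJadd, hJhJsmul, hJhJnorm, hJhJinv⟩
  have hWlx : ∀ x : H2, W (star W x) = x := by
    intro x
    have := congrArg (fun A : H2 →L[ℂ] H2 => A x) hWl
    simpa using this
  have hWrx : ∀ x : H2, star W (W x) = x := by
    intro x
    have := congrArg (fun A : H2 →L[ℂ] H2 => A x) hWr
    simpa using this
  -- basic inner product computations
  have I1 : ∀ a b c a' b' c' : H,
      ⟪m (τ a b) c, m (τ a' b') c'⟫ = ⟪a, a'⟫ * ⟪b, b'⟫ * ⟪c, c'⟫ := by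
    intro a b c a' b' c'
    rw [hminner, hτinner]
  have I2 : ∀ (a a' : H) (z z' : H2), ⟪m' a z, m' a' z'⟫ = ⟪a, a'⟫ * ⟪z, z'⟫ := by
    have step1 : ∀ (a a' b c : H) (z' : H2),
        ⟪m' a (τ b c), m' a' z'⟫ = ⟪a, a'⟫ * ⟪τ b c, z'⟫ := by
      intro a a' b c
      refine extDense hτdense id
        (f := fun z' => ⟪m' a (τ b c), m' a' z'⟫)
        (g := fun z' => ⟪a, a'⟫ * ⟪τ b c, z'⟫) ?_ ?_ ?_ ?_ ?_ ?_ ?_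
      · exact continuous_const.inner (m' a').continuous
      · exact continuous_const.mul (continuous_const.inner continuous_id)
      · intro x y; simp only [map_add, inner_add_right]
      · intro x y; simp only [inner_add_right, mul_add]
      · intro c' x; simp only [map_smul, inner_smul_right, smul_eq_mul, id_eq]
      · intro c' x; simp only [inner_smul_right, smul_eq_mul, id_eq]; ring
      · rintro _ ⟨⟨b', c'⟩, rfl⟩
        dsimp only
        rw [← hmm', ← hmm', I1, hτinner]
        ring
    intro a a' z z'
    refine extDense hτdense (starRingEnd ℂ)
      (f := fun z => ⟪m' a z, m' a' z'⟫)
      (g := fun z => ⟪a, a'⟫ * ⟪z, z'⟫) ?_ ?_ ?_ ?_ ?_ ?_ ?_ z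
    · exact ((m' a).continuous).inner continuous_const
    · exact continuous_const.mul (continuous_id.inner continuous_const)
    · intro x y; simp only [map_add, inner_add_left]
    · intro x y; simp only [inner_add_left, mul_add]
    · intro c x; simp only [map_smul, inner_smul_left, smul_eq_mul]
    · intro c x; simp only [inner_smul_left, smul_eq_mul]; ring
    · rintro _ ⟨⟨b, c⟩, rfl⟩
      dsimp only
      exact step1 a a' b c z'
  -- evaluation of leg23 ∘ ρ on product vectors
  have legA : ∀ (S : H →L[ℂ] H) (u : H2) (c : H), leg23 (ρ S) (m u c) = m u (S c) := by
    intro S u c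
    refine extDense hτdense id
      (f := fun u : H2 => leg23 (ρ S) (m u c))
      (g := fun u : H2 => m u (S c)) ?_ ?_ ?_ ?_ ?_ ?_ ?_ u
    · exact (leg23 (ρ S)).continuous.comp ((m.flip c).continuous)
    · exact (m.flip (S c)).continuous
    · intro x y; simp only [map_add, ContinuousLinearMap.add_apply]
    · intro x y; simp only [map_add, ContinuousLinearMap.add_apply]
    · intro c' x; simp only [map_smul, ContinuousLinearMap.smul_apply, id_eq]
    · intro c' x; simp only [map_smul, ContinuousLinearMap.smul_apply, id_eq]
    · rintro _ ⟨⟨a, b⟩, rfl⟩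
      dsimp only
      rw [hmm', hleg23, hρ, ← hmm']
  -- multiplicativity and units of the legs
  have leg12mul : ∀ S S' : H2 →L[ℂ] H2, leg12 S * leg12 S' = leg12 (S * S') := by
    intro S S'
    refine ContinuousLinearMap.ext_on hmdense ?_
    rintro _ ⟨⟨⟨a, b⟩, c⟩, rfl⟩
    dsimp only
    simp only [ContinuousLinearMap.mul_apply]
    rw [hleg12, hleg12, hleg12, ContinuousLinearMap.mul_apply]
  have leg12one : leg12 1 = 1 := by
    refine ContinuousLinearMap.ext_on hmdense ?_
    rintro _ ⟨⟨⟨a, b⟩, c⟩, rfl⟩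
    dsimp only
    rw [hleg12, ContinuousLinearMap.one_apply, ContinuousLinearMap.one_apply]
  have leg23mul : ∀ S S' : H2 →L[ℂ] H2, leg23 S * leg23 S' = leg23 (S * S') := by
    intro S S'
    refine ContinuousLinearMap.ext_on hmdense ?_
    rintro _ ⟨⟨⟨a, b⟩, c⟩, rfl⟩
    dsimp only
    simp only [ContinuousLinearMap.mul_apply]
    rw [hmm', hleg23, hleg23, hleg23, ContinuousLinearMap.mul_apply]
  have leg23one : leg23 1 = 1 := by
    refine ContinuousLinearMap.ext_on hmdense ?_
    rintro _ ⟨⟨⟨a, b⟩, c⟩, rfl⟩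
    dsimp only
    rw [hmm', hleg23, ContinuousLinearMap.one_apply, ContinuousLinearMap.one_apply]
  have SgSg : Sg * Sg = 1 := by
    refine ContinuousLinearMap.ext_on hτdense ?_
    rintro _ ⟨⟨a, b⟩, rfl⟩
    dsimp only
    rw [ContinuousLinearMap.mul_apply, hSg, hSg, ContinuousLinearMap.one_apply]
  have leg12SgSg : leg12 Sg * leg12 Sg = 1 := by rw [leg12mul, SgSg, leg12one]
  have leg13mul : ∀ S S' : H2 →L[ℂ] H2, leg13 S * leg13 S' = leg13 (S * S') := by
    intro S S'
    rw [hleg13 S, hleg13 S', hleg13 (S * S'), ← leg23mul]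
    simp only [mul_assoc]
    rw [← mul_assoc (leg12 Sg) (leg12 Sg), leg12SgSg, one_mul]
  have leg13one : leg13 1 = 1 := by
    rw [hleg13, leg23one, mul_one, leg12SgSg]
  -- star compatibility of the legs
  have starleg12 : ∀ S : H2 →L[ℂ] H2, star (leg12 S) = leg12 (star S) := by
    intro S
    have lvl1 : ∀ (a b : H) (c : H) (y : H3),
        ⟪leg12 (star S) (m (τ a b) c), y⟫ = ⟪m (τ a b) c, leg12 S y⟫ := by
      intro a b c
      refine extDense hmdense id
        (f := fun y => ⟪leg12 (star S) (m (τ a b) c), y⟫)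
        (g := fun y => ⟪m (τ a b) c, leg12 S y⟫) ?_ ?_ ?_ ?_ ?_ ?_ ?_
      · exact continuous_const.inner continuous_id
      · exact continuous_const.inner (leg12 S).continuous
      · intro x y; simp only [inner_add_right]
      · intro x y; simp only [map_add, inner_add_right]
      · intro c' x; simp only [inner_smul_right, smul_eq_mul, id_eq]
      · intro c' x; simp only [map_smul, inner_smul_right, smul_eq_mul, id_eq]
      · rintro _ ⟨⟨⟨a', b'⟩, c'⟩, rfl⟩
        dsimp only
        rw [hleg12, hleg12, hminner, hminner, ContinuousLinearMap.star_eq_adjoint,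
          ContinuousLinearMap.adjoint_inner_left]
    have key : ∀ (y x : H3), ⟪leg12 (star S) x, y⟫ = ⟪x, leg12 S y⟫ := by
      intro y
      refine extDense hmdense (starRingEnd ℂ)
        (f := fun x => ⟪leg12 (star S) x, y⟫)
        (g := fun x => ⟪x, leg12 S y⟫) ?_ ?_ ?_ ?_ ?_ ?_ ?_
      · exact ((leg12 (star S)).continuous).inner continuous_const
      · exact continuous_id.inner continuous_const
      · intro x y'; simp only [map_add, inner_add_left]
      · intro x y'; simp only [inner_add_left]
      · intro c x; simp only [map_smul, inner_smul_left, smul_eq_mul]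
      · intro c x; simp only [inner_smul_left, smul_eq_mul]
      · rintro _ ⟨⟨⟨a, b⟩, c⟩, rfl⟩
        dsimp only
        exact lvl1 a b c y
    have : leg12 (star S) = ContinuousLinearMap.adjoint (leg12 S) :=
      (ContinuousLinearMap.eq_adjoint_iff _ _).mpr fun x y => key y x
    rw [ContinuousLinearMap.star_eq_adjoint]
    exact this.symm
  have starleg23 : ∀ S : H2 →L[ℂ] H2, star (leg23 S) = leg23 (star S) := by
    intro S
    have lvl1 : ∀ (a b : H) (c : H) (y : H3),
        ⟪leg23 (star S) (m (τ a b) c), y⟫ = ⟪m (τ a b) c, leg23 S y⟫ := by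
      intro a b c
      refine extDense hmdense id
        (f := fun y => ⟪leg23 (star S) (m (τ a b) c), y⟫)
        (g := fun y => ⟪m (τ a b) c, leg23 S y⟫) ?_ ?_ ?_ ?_ ?_ ?_ ?_
      · exact continuous_const.inner continuous_id
      · exact continuous_const.inner (leg23 S).continuous
      · intro x y; simp only [inner_add_right]
      · intro x y; simp only [map_add, inner_add_right]
      · intro c' x; simp only [inner_smul_right, smul_eq_mul, id_eq]
      · intro c' x; simp only [map_smul, inner_smul_right, smul_eq_mul, id_eq]
      · rintro _ ⟨⟨⟨a', b'⟩, c'⟩, rfl⟩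
        dsimp only
        rw [hmm', hleg23, hmm' a' b' c', hleg23, I2, I2, ContinuousLinearMap.star_eq_adjoint,
          ContinuousLinearMap.adjoint_inner_left]
    have key : ∀ (y x : H3), ⟪leg23 (star S) x, y⟫ = ⟪x, leg23 S y⟫ := by
      intro y
      refine extDense hmdense (starRingEnd ℂ)
        (f := fun x => ⟪leg23 (star S) x, y⟫)
        (g := fun x => ⟪x, leg23 S y⟫) ?_ ?_ ?_ ?_ ?_ ?_ ?_
      · exact ((leg23 (star S)).continuous).inner continuous_const
      · exact continuous_id.inner continuous_const
      · intro x y'; simp only [map_add, inner_add_left]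
      · intro x y'; simp only [inner_add_left]
      · intro c x; simp only [map_smul, inner_smul_left, smul_eq_mul]
      · intro c x; simp only [inner_smul_left, smul_eq_mul]
      · rintro _ ⟨⟨⟨a, b⟩, c⟩, rfl⟩
        dsimp only
        exact lvl1 a b c y
    have : leg23 (star S) = ContinuousLinearMap.adjoint (leg23 S) :=
      (ContinuousLinearMap.eq_adjoint_iff _ _).mpr fun x y => key y x
    rw [ContinuousLinearMap.star_eq_adjoint]
    exact this.symm
  have starSg : star Sg = Sg := by
    have lvl1 : ∀ (a b : H) (y : H2), ⟪Sg (τ a b), y⟫ = ⟪τ a b, Sg y⟫ := by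
      intro a b
      refine extDense hτdense id
        (f := fun y => ⟪Sg (τ a b), y⟫)
        (g := fun y => ⟪τ a b, Sg y⟫) ?_ ?_ ?_ ?_ ?_ ?_ ?_
      · exact continuous_const.inner continuous_id
      · exact continuous_const.inner Sg.continuous
      · intro x y; simp only [inner_add_right]
      · intro x y; simp only [map_add, inner_add_right]
      · intro c' x; simp only [inner_smul_right, smul_eq_mul, id_eq]
      · intro c' x; simp only [map_smul, inner_smul_right, smul_eq_mul, id_eq]
      · rintro _ ⟨⟨a', b'⟩, rfl⟩
        dsimp only
        rw [hSg, hSg, hτinner, hτinner]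
        ring
    have key : ∀ (y x : H2), ⟪Sg x, y⟫ = ⟪x, Sg y⟫ := by
      intro y
      refine extDense hτdense (starRingEnd ℂ)
        (f := fun x => ⟪Sg x, y⟫)
        (g := fun x => ⟪x, Sg y⟫) ?_ ?_ ?_ ?_ ?_ ?_ ?_
      · exact Sg.continuous.inner continuous_const
      · exact continuous_id.inner continuous_const
      · intro x y'; simp only [map_add, inner_add_left]
      · intro x y'; simp only [inner_add_left]
      · intro c x; simp only [map_smul, inner_smul_left, smul_eq_mul]
      · intro c x; simp only [inner_smul_left, smul_eq_mul]
      · rintro _ ⟨⟨a, b⟩, rfl⟩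
        dsimp only
        exact lvl1 a b y
    have : Sg = ContinuousLinearMap.adjoint Sg :=
      (ContinuousLinearMap.eq_adjoint_iff _ _).mpr fun x y => key y x
    rw [ContinuousLinearMap.star_eq_adjoint]
    exact this.symm
  have starleg13 : ∀ S : H2 →L[ℂ] H2, star (leg13 S) = leg13 (star S) := by
    intro S
    rw [hleg13, hleg13, star_mul, star_mul, starleg12, starSg, starleg23]
    simp only [mul_assoc]
  -- properties of Φ : S ↦ leg23 (ρ S)
  have Phiadd : ∀ S S' : H →L[ℂ] H, leg23 (ρ (S + S')) = leg23 (ρ S) + leg23 (ρ S') := by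
    intro S S'
    refine ContinuousLinearMap.ext_on hmdense ?_
    rintro _ ⟨⟨⟨a, b⟩, c⟩, rfl⟩
    dsimp only
    rw [ContinuousLinearMap.add_apply, legA, legA, legA, ContinuousLinearMap.add_apply, map_add]
  have Phismul : ∀ (c : ℂ) (S : H →L[ℂ] H), leg23 (ρ (c • S)) = c • leg23 (ρ S) := by
    intro c S
    refine ContinuousLinearMap.ext_on hmdense ?_
    rintro _ ⟨⟨⟨a, b⟩, c'⟩, rfl⟩
    dsimp only
    rw [ContinuousLinearMap.smul_apply, legA, legA, ContinuousLinearMap.smul_apply, map_smul]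
  have Phizero : leg23 (ρ 0) = 0 := by
    refine ContinuousLinearMap.ext_on hmdense ?_
    rintro _ ⟨⟨⟨a, b⟩, c⟩, rfl⟩
    dsimp only
    rw [legA, ContinuousLinearMap.zero_apply, ContinuousLinearMap.zero_apply, map_zero]
  have Phimul : ∀ S S' : H →L[ℂ] H, leg23 (ρ (S * S')) = leg23 (ρ S) * leg23 (ρ S') := by
    intro S S'
    refine ContinuousLinearMap.ext_on hmdense ?_
    rintro _ ⟨⟨⟨a, b⟩, c⟩, rfl⟩
    dsimp only
    rw [ContinuousLinearMap.mul_apply, legA, legA, legA, ContinuousLinearMap.mul_apply]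
  have Phistar : ∀ S : H →L[ℂ] H, leg23 (ρ (star S)) = star (leg23 (ρ S)) := by
    intro S
    have lvl1 : ∀ (a b : H) (c : H) (y : H3),
        ⟪leg23 (ρ (star S)) (m (τ a b) c), y⟫ = ⟪m (τ a b) c, leg23 (ρ S) y⟫ := by
      intro a b c
      refine extDense hmdense id
        (f := fun y => ⟪leg23 (ρ (star S)) (m (τ a b) c), y⟫)
        (g := fun y => ⟪m (τ a b) c, leg23 (ρ S) y⟫) ?_ ?_ ?_ ?_ ?_ ?_ ?_
      · exact continuous_const.inner continuous_id
      · exact continuous_const.inner (leg23 (ρ S)).continuous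
      · intro x y; simp only [inner_add_right]
      · intro x y; simp only [map_add, inner_add_right]
      · intro c' x; simp only [inner_smul_right, smul_eq_mul, id_eq]
      · intro c' x; simp only [map_smul, inner_smul_right, smul_eq_mul, id_eq]
      · rintro _ ⟨⟨⟨a', b'⟩, c'⟩, rfl⟩
        dsimp only
        rw [legA, legA, hminner, hminner, ContinuousLinearMap.star_eq_adjoint,
          ContinuousLinearMap.adjoint_inner_left]
    have key : ∀ (y x : H3), ⟪leg23 (ρ (star S)) x, y⟫ = ⟪x, leg23 (ρ S) y⟫ := by
      intro y
      refine extDense hmdense (starRingEnd ℂ)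
        (f := fun x => ⟪leg23 (ρ (star S)) x, y⟫)
        (g := fun x => ⟪x, leg23 (ρ S) y⟫) ?_ ?_ ?_ ?_ ?_ ?_ ?_
      · exact ((leg23 (ρ (star S))).continuous).inner continuous_const
      · exact continuous_id.inner continuous_const
      · intro x y'; simp only [map_add, inner_add_left]
      · intro x y'; simp only [inner_add_left]
      · intro c x; simp only [map_smul, inner_smul_left, smul_eq_mul]
      · intro c x; simp only [inner_smul_left, smul_eq_mul]
      · rintro _ ⟨⟨⟨a, b⟩, c⟩, rfl⟩
        dsimp only
        exact lvl1 a b c y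
    have h2 : leg23 (ρ (star S)) = ContinuousLinearMap.adjoint (leg23 (ρ S)) :=
      (ContinuousLinearMap.eq_adjoint_iff _ _).mpr fun x y => key y x
    rw [ContinuousLinearMap.star_eq_adjoint]
    exact h2
  have Phinorm : ∀ S : H →L[ℂ] H, ‖leg23 (ρ S)‖ ≤ ‖S‖ := by
    intro S
    let φ : (H →L[ℂ] H) →⋆ₙₐ[ℂ] (H3 →L[ℂ] H3) :=
      { toFun := fun S => leg23 (ρ S)
        map_smul' := fun c S => Phismul c S
        map_zero' := Phizero
        map_add' := fun S S' => Phiadd S S'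
        map_mul' := fun S S' => Phimul S S'
        map_star' := fun S => Phistar S }
    exact NonUnitalStarAlgHom.norm_apply_le φ S
  -- star of W' and W'' pointwise, and unitarity
  have hW'star : ∀ x : H2, star W' x = JJ (star W (JJ x)) := by
    intro x
    rw [ContinuousLinearMap.star_eq_adjoint]
    refine ext_inner_left ℂ fun y => ?_
    rw [ContinuousLinearMap.adjoint_inner_right, hW' y, cJJ.inner_left, ←
      ContinuousLinearMap.adjoint_inner_right, ← ContinuousLinearMap.star_eq_adjoint,
      cJJ.inner_right]
  have hW''star : ∀ x : H2, star W'' x = JJh (star W (JJh x)) := by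
    intro x
    rw [ContinuousLinearMap.star_eq_adjoint]
    refine ext_inner_left ℂ fun y => ?_
    rw [ContinuousLinearMap.adjoint_inner_right, hW'' y, cJJh.inner_left, ←
      ContinuousLinearMap.adjoint_inner_right, ← ContinuousLinearMap.star_eq_adjoint,
      cJJh.inner_right]
  have uW'r : star W' * W' = 1 := by
    refine ContinuousLinearMap.ext fun x => ?_
    rw [ContinuousLinearMap.mul_apply, hW'star, hW', cJJ.inv, hWrx, cJJ.inv,
      ContinuousLinearMap.one_apply]
  have uW'l : W' * star W' = 1 := by
    refine ContinuousLinearMap.ext fun x => ?_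
    rw [ContinuousLinearMap.mul_apply, hW'star, hW', cJJ.inv, hWlx, cJJ.inv,
      ContinuousLinearMap.one_apply]
  have uW''r : star W'' * W'' = 1 := by
    refine ContinuousLinearMap.ext fun x => ?_
    rw [ContinuousLinearMap.mul_apply, hW''star, hW'', cJJh.inv, hWrx, cJJh.inv,
      ContinuousLinearMap.one_apply]
  -- unitarity of the lifted legs
  have uQ : star (leg13 W) * leg13 W = 1 := by rw [starleg13, leg13mul, hWr, leg13one]
  have uR : star (leg23 W) * leg23 W = 1 := by rw [starleg23, leg23mul, hWr, leg23one]
  have uRl : leg23 W * star (leg23 W) = 1 := by rw [starleg23, leg23mul, hWl, leg23one]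
  have uCl : leg13 W' * star (leg13 W') = 1 := by rw [starleg13, leg13mul, uW'l, leg13one]
  have uCst : star (star (leg13 W')) * star (leg13 W') = 1 := by rw [star_star]; exact uCl
  have uSg12 : star (leg12 Sg) * leg12 Sg = 1 := by rw [starleg12, starSg, leg12SgSg]
  have uD : star (leg12 (W * W'')) * leg12 (W * W'') = 1 := by
    rw [starleg12, leg12mul]
    have e : star (W * W'') * (W * W'') = 1 := by
      rw [star_mul]
      calc star W'' * star W * (W * W'') = star W'' * (star W * W) * W'' := by
            simp only [mul_assoc]
        _ = 1 := by rw [hWr, mul_one, uW''r]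
    rw [e, leg12one]
  -- leg23 (ρ X) commutes with every leg12
  have Tcomm : ∀ S : H2 →L[ℂ] H2, leg23 (ρ X) * leg12 S = leg12 S * leg23 (ρ X) := by
    intro S
    refine ContinuousLinearMap.ext_on hmdense ?_
    rintro _ ⟨⟨⟨a, b⟩, c⟩, rfl⟩
    dsimp only
    rw [ContinuousLinearMap.mul_apply, ContinuousLinearMap.mul_apply, hleg12, legA, legA, hleg12]
  -- evaluation of leg13 on product vectors
  have leg13eval : ∀ (S : H2 →L[ℂ] H2) (a b c : H),
      leg13 S (m (τ a b) c) = leg12 Sg (m' b (S (τ a c))) := by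
    intro S a b c
    rw [hleg13]
    simp only [ContinuousLinearMap.mul_apply]
    rw [hleg12, hSg, hmm', hleg23]
  -- matrix elements of leg12 Sg ∘ m'
  have Gme : ∀ (p p' q' c' : H) (s : H2),
      ⟪leg12 Sg (m' p s), m (τ p' q') c'⟫ = ⟪p, q'⟫ * ⟪s, τ p' c'⟫ := by
    intro p p' q' c'
    refine extDense hτdense (starRingEnd ℂ)
      (f := fun s => ⟪leg12 Sg (m' p s), m (τ p' q') c'⟫)
      (g := fun s => ⟪p, q'⟫ * ⟪s, τ p' c'⟫) ?_ ?_ ?_ ?_ ?_ ?_ ?_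
    · exact (((leg12 Sg).continuous.comp (m' p).continuous)).inner continuous_const
    · exact continuous_const.mul (continuous_id.inner continuous_const)
    · intro x y; simp only [map_add, inner_add_left]
    · intro x y; simp only [inner_add_left, mul_add]
    · intro c x; simp only [map_smul, inner_smul_left, smul_eq_mul]
    · intro c x; simp only [inner_smul_left, smul_eq_mul]; ring
    · rintro _ ⟨⟨r, t⟩, rfl⟩
      dsimp only
      rw [← hmm', hleg12, hSg, I1, hτinner]
      ring
  -- the conjugation identity S1
  have S1 : ∀ (c a' : H) (w z : H2),
      ⟪m (JJh w) c, m' a' z⟫ = (starRingEnd ℂ) ⟪m w (J c), m' (J a') (JhJ z)⟫ := by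
    intro c a'
    have lvl1 : ∀ (p q : H) (z : H2),
        ⟪m (JJh (τ p q)) c, m' a' z⟫ = (starRingEnd ℂ) ⟪m (τ p q) (J c), m' (J a') (JhJ z)⟫ := by
      intro p q
      refine extDense hτdense id
        (f := fun z => ⟪m (JJh (τ p q)) c, m' a' z⟫)
        (g := fun z => (starRingEnd ℂ) ⟪m (τ p q) (J c), m' (J a') (JhJ z)⟫) ?_ ?_ ?_ ?_ ?_ ?_ ?_
      · exact continuous_const.inner (m' a').continuous
      · exact (continuous_const.inner ((m' (J a')).continuous.comp cJhJ.continuous)).star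
      · intro x y; simp only [map_add, inner_add_right]
      · intro x y; simp only [cJhJ.add, map_add, inner_add_right]
      · intro c' x; simp only [map_smul, inner_smul_right, smul_eq_mul, id_eq]
      · intro c' x
        simp only [cJhJ.smul, map_smul, inner_smul_right, smul_eq_mul, map_mul, id_eq,
          Complex.conj_conj]
      · rintro _ ⟨⟨p', q'⟩, rfl⟩
        dsimp only
        rw [hJJhtmul, hJhJtmul, ← hmm' a' p' q', ← hmm' (J a') (Jh p') (J q'), I1, I1,
          map_mul, map_mul, ← cJ.inner_left, ← cJh.inner_left, cJ.inner_map_map,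
          inner_conj_symm]
    intro w z
    refine extDense hτdense id
      (f := fun w => ⟪m (JJh w) c, m' a' z⟫)
      (g := fun w => (starRingEnd ℂ) ⟪m w (J c), m' (J a') (JhJ z)⟫) ?_ ?_ ?_ ?_ ?_ ?_ ?_ w
    · exact (((m.flip c).continuous.comp cJJh.continuous)).inner continuous_const
    · exact (((m.flip (J c)).continuous).inner continuous_const).star
    · intro x y; simp only [cJJh.add, map_add, ContinuousLinearMap.add_apply, inner_add_left]
    · intro x y; simp only [map_add, ContinuousLinearMap.add_apply, inner_add_left]
    · intro c' x
      simp only [cJJh.smul, map_smul, ContinuousLinearMap.smul_apply, inner_smul_left,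
        smul_eq_mul, Complex.conj_conj, id_eq]
    · intro c' x
      simp only [map_smul, ContinuousLinearMap.smul_apply, inner_smul_left, smul_eq_mul,
        map_mul, Complex.conj_conj, id_eq]
    · rintro _ ⟨⟨p, q⟩, rfl⟩
      dsimp only
      exact lvl1 p q z
  -- the conjugation identity S2
  have S2 : ∀ (a c' : H) (z w : H2),
      ⟪leg13 W' (m' a z), m w c'⟫
        = (starRingEnd ℂ) ⟪leg13 W (m' (J a) (JhJ z)), m (JJh w) (J c')⟫ := by
    intro a c'
    have lvl1 : ∀ (p q p' q' : H),
        ⟪leg13 W' (m' a (τ p q)), m (τ p' q') c'⟫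
          = (starRingEnd ℂ) ⟪leg13 W (m' (J a) (JhJ (τ p q))), m (JJh (τ p' q')) (J c')⟫ := by
      intro p q p' q'
      have lhs1 : leg13 W' (m' a (τ p q)) = leg12 Sg (m' p (W' (τ a q))) := by
        rw [← hmm', leg13eval]
      have rhs1 : leg13 W (m' (J a) (JhJ (τ p q))) = leg12 Sg (m' (Jh p) (W (τ (J a) (J q)))) := by
        rw [hJhJtmul, ← hmm', leg13eval]
      rw [lhs1, rhs1, hJJhtmul, Gme, Gme, cJh.inner_map_map, map_mul]
      have e1 : ⟪W' (τ a q), τ p' c'⟫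
          = (starRingEnd ℂ) ⟪W (τ (J a) (J q)), τ (J p') (J c')⟫ := by
        rw [hW', ← hJJtmul, cJJ.inner_left, hJJtmul, hJJtmul]
      rw [e1, inner_conj_symm, inner_conj_symm]
    have lvl2 : ∀ (p q : H) (w : H2),
        ⟪leg13 W' (m' a (τ p q)), m w c'⟫
          = (starRingEnd ℂ) ⟪leg13 W (m' (J a) (JhJ (τ p q))), m (JJh w) (J c')⟫ := by
      intro p q
      refine extDense hτdense id
        (f := fun w => ⟪leg13 W' (m' a (τ p q)), m w c'⟫)
        (g := fun w => (starRingEnd ℂ)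
          ⟪leg13 W (m' (J a) (JhJ (τ p q))), m (JJh w) (J c')⟫) ?_ ?_ ?_ ?_ ?_ ?_ ?_
      · exact continuous_const.inner ((m.flip c').continuous)
      · exact (continuous_const.inner ((m.flip (J c')).continuous.comp cJJh.continuous)).star
      · intro x y; simp only [map_add, ContinuousLinearMap.add_apply, inner_add_right]
      · intro x y; simp only [cJJh.add, map_add, ContinuousLinearMap.add_apply, inner_add_right]
      · intro c'' x
        simp only [map_smul, ContinuousLinearMap.smul_apply, inner_smul_right, smul_eq_mul, id_eq]
      · intro c'' x
        simp only [cJJh.smul, map_smul, ContinuousLinearMap.smul_apply, inner_smul_right,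
          smul_eq_mul, map_mul, Complex.conj_conj, id_eq]
      · rintro _ ⟨⟨p', q'⟩, rfl⟩
        dsimp only
        exact lvl1 p q p' q'
    intro z w
    refine extDense hτdense (starRingEnd ℂ)
      (f := fun z => ⟪leg13 W' (m' a z), m w c'⟫)
      (g := fun z => (starRingEnd ℂ)
        ⟪leg13 W (m' (J a) (JhJ z)), m (JJh w) (J c')⟫) ?_ ?_ ?_ ?_ ?_ ?_ ?_ z
    · exact (((leg13 W').continuous.comp (m' a).continuous)).inner continuous_const
    · exact ((((leg13 W).continuous.comp ((m' (J a)).continuous.comp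
        cJhJ.continuous))).inner continuous_const).star
    · intro x y; simp only [map_add, inner_add_left]
    · intro x y; simp only [cJhJ.add, map_add, inner_add_left]
    · intro c'' x; simp only [map_smul, inner_smul_left, smul_eq_mul]
    · intro c'' x
      simp only [cJhJ.smul, map_smul, inner_smul_left, smul_eq_mul, map_mul, Complex.conj_conj]
    · rintro _ ⟨⟨p, q⟩, rfl⟩
      dsimp only
      exact lvl2 p q w
  -- the conjugated pentagon identity
  have dagger : leg12 W'' * leg13 W' * leg23 (star W) = leg23 (star W) * leg12 W'' := by
    have lvl1 : ∀ (a b c a' b' c' : H),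
        ⟪(leg12 W'' * leg13 W' * leg23 (star W)) (m (τ a b) c), m (τ a' b') c'⟫
          = ⟪(leg23 (star W) * leg12 W'') (m (τ a b) c), m (τ a' b') c'⟫ := by
      intro a b c a' b' c'
      have fold : leg12 W (leg13 W (leg23 W (m (τ (J a) (Jh b)) (J c))))
          = leg23 W (leg12 W (m (τ (J a) (Jh b)) (J c))) := by
        have := congrArg (fun A : H3 →L[ℂ] H3 => A (m (τ (J a) (Jh b)) (J c))) hPent
        simpa only [ContinuousLinearMap.mul_apply] using this
      have ez : JhJ (star W (τ b c)) = W (τ (Jh b) (J c)) := by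
        rw [hWstar, cJhJ.inv, hJhJtmul]
      have ew : JJh (star W'' (τ a' b')) = star W (τ (J a') (Jh b')) := by
        rw [hW''star, cJJh.inv, hJJhtmul]
      have ez2 : JhJ (W (τ b' c')) = star W (τ (Jh b') (J c')) := by
        rw [← hJhJtmul, hWstar, cJhJ.inv]
      have LHSeq : ⟪(leg12 W'' * leg13 W' * leg23 (star W)) (m (τ a b) c), m (τ a' b') c'⟫
          = (starRingEnd ℂ)
              ⟪leg23 W (leg12 W (m (τ (J a) (Jh b)) (J c))), m (τ (J a') (Jh b')) (J c')⟫ := by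
        simp only [ContinuousLinearMap.mul_apply]
        rw [hmm' a b c, hleg23, clm_move, starleg12, hleg12, S2, ez, ew]
        rw [← hleg23 W (J a), ← hmm' (J a) (Jh b) (J c), ← hleg12, ← starleg12, ← clm_move,
          fold]
      have RHSeq : ⟪(leg23 (star W) * leg12 W'') (m (τ a b) c), m (τ a' b') c'⟫
          = (starRingEnd ℂ)
              ⟪leg23 W (leg12 W (m (τ (J a) (Jh b)) (J c))), m (τ (J a') (Jh b')) (J c')⟫ := by
        simp only [ContinuousLinearMap.mul_apply]
        rw [hleg12, clm_move, starleg23, star_star, hmm' a' b' c', hleg23]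
        rw [hW'', hJJhtmul, S1, ez2]
        rw [← hleg12, ← hleg23, ← hmm' (J a') (Jh b') (J c')]
        rw [← starleg23, ← clm_move]
      rw [LHSeq, RHSeq]
    have weak : ∀ (y x : H3),
        ⟪(leg12 W'' * leg13 W' * leg23 (star W)) x, y⟫
          = ⟪(leg23 (star W) * leg12 W'') x, y⟫ := by
      have lvl15 : ∀ (a b c : H) (y : H3),
          ⟪(leg12 W'' * leg13 W' * leg23 (star W)) (m (τ a b) c), y⟫
            = ⟪(leg23 (star W) * leg12 W'') (m (τ a b) c), y⟫ := by
        intro a b c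
        refine extDense hmdense id
          (f := fun y => ⟪(leg12 W'' * leg13 W' * leg23 (star W)) (m (τ a b) c), y⟫)
          (g := fun y => ⟪(leg23 (star W) * leg12 W'') (m (τ a b) c), y⟫) ?_ ?_ ?_ ?_ ?_ ?_ ?_
        · exact continuous_const.inner continuous_id
        · exact continuous_const.inner continuous_id
        · intro x y; simp only [inner_add_right]
        · intro x y; simp only [inner_add_right]
        · intro c' x; simp only [inner_smul_right, smul_eq_mul, id_eq]
        · intro c' x; simp only [inner_smul_right, smul_eq_mul, id_eq]
        · rintro _ ⟨⟨⟨a', b'⟩, c'⟩, rfl⟩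
          dsimp only
          exact lvl1 a b c a' b' c'
      intro y
      refine extDense hmdense (starRingEnd ℂ)
        (f := fun x => ⟪(leg12 W'' * leg13 W' * leg23 (star W)) x, y⟫)
        (g := fun x => ⟪(leg23 (star W) * leg12 W'') x, y⟫) ?_ ?_ ?_ ?_ ?_ ?_ ?_
      · exact ((leg12 W'' * leg13 W' * leg23 (star W)).continuous).inner continuous_const
      · exact ((leg23 (star W) * leg12 W'').continuous).inner continuous_const
      · intro x y'; simp only [map_add, inner_add_left]
      · intro x y'; simp only [map_add, inner_add_left]
      · intro c x; simp only [map_smul, inner_smul_left, smul_eq_mul]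
      · intro c x; simp only [map_smul, inner_smul_left, smul_eq_mul]
      · rintro _ ⟨⟨⟨a, b⟩, c⟩, rfl⟩
        dsimp only
        exact lvl15 a b c y
    exact ContinuousLinearMap.ext fun x => ext_inner_right ℂ fun y => weak y x
  -- rearranged commutation identities
  have e1 : leg23 W * leg23 (star W) = 1 := by rw [leg23mul, hWl, leg23one]
  have e2 : leg23 (star W) * leg23 W = 1 := by rw [leg23mul, hWr, leg23one]
  have hdagger2 : leg23 W * leg12 W'' * leg13 W' = leg12 W'' * leg23 W := by
    have h3 : leg23 W * (leg12 W'' * leg13 W' * leg23 (star W)) * leg23 W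
        = leg23 W * leg12 W'' * leg13 W' := by
      simp only [mul_assoc]
      rw [e2, mul_one]
    rw [← h3, dagger]
    simp only [← mul_assoc]
    rw [e1, one_mul]
  have keyRB : leg23 W * leg12 W'' = leg12 W'' * leg23 W * star (leg13 W') := by
    calc leg23 W * leg12 W''
        = leg23 W * leg12 W'' * (leg13 W' * star (leg13 W')) := by rw [uCl, mul_one]
      _ = leg23 W * leg12 W'' * leg13 W' * star (leg13 W') := by simp only [mul_assoc]
      _ = leg12 W'' * leg23 W * star (leg13 W') := by rw [hdagger2]
  have keyfact : leg23 W * leg12 W * leg12 W''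
      = leg12 (W * W'') * (leg13 W * (leg23 W * star (leg13 W'))) := by
    calc leg23 W * leg12 W * leg12 W''
        = leg12 W * leg13 W * leg23 W * leg12 W'' := by rw [hPent]
      _ = leg12 W * leg13 W * (leg23 W * leg12 W'') := by
          simp only [mul_assoc]
      _ = leg12 W * leg13 W * (leg12 W'' * leg23 W * star (leg13 W')) := by rw [keyRB]
      _ = leg12 W * (leg13 W * leg12 W'') * (leg23 W * star (leg13 W')) := by
          simp only [mul_assoc]
      _ = leg12 W * (leg12 W'' * leg13 W) * (leg23 W * star (leg13 W')) := by rw [hcomm.eq]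
      _ = leg12 (W * W'') * (leg13 W * (leg23 W * star (leg13 W'))) := by
          rw [← leg12mul]
          simp only [mul_assoc]
  -- assembly
  have happ : (leg23 W * leg12 W * leg12 W'') (m (τ ξ η) ζ)
      = leg12 (W * W'') (leg13 W (leg23 W (star (leg13 W') (m (τ ξ η) ζ)))) := by
    rw [keyfact]
    simp only [ContinuousLinearMap.mul_apply]
  rw [happ]
  have hTD : leg23 (ρ X) (leg12 (W * W'')
        (leg13 W (leg23 W (star (leg13 W') (m (τ ξ η) ζ)))))
      = leg12 (W * W'') (leg23 (ρ X)
        (leg13 W (leg23 W (star (leg13 W') (m (τ ξ η) ζ))))) := by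
    have := congrArg (fun A : H3 →L[ℂ] H3 =>
      A (leg13 W (leg23 W (star (leg13 W') (m (τ ξ η) ζ))))) (Tcomm (W * W''))
    simpa only [ContinuousLinearMap.mul_apply] using this
  rw [hTD, unital_inner uD]
  have hXz : (inner ℂ (X ζ) ζ : ℂ) = ⟪leg23 (ρ X) (m (τ ξ η) ζ), m (τ ξ η) ζ⟫ := by
    rw [legA, hminner, hτinner, inner_self_eq_norm_sq_to_K, inner_self_eq_norm_sq_to_K, hξ, hη]
    norm_num
  rw [hXz]
  -- norms
  have hvinner : ⟪m (τ ξ η) ζ, m (τ ξ η) ζ⟫ = 1 := by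
    rw [I1, inner_self_eq_norm_sq_to_K, inner_self_eq_norm_sq_to_K, inner_self_eq_norm_sq_to_K,
      hξ, hη, hζ]
    norm_num
  have hv1 : ‖m (τ ξ η) ζ‖ = 1 := norm_eq_one_of_inner_eq hvinner
  have hCv : ‖star (leg13 W') (m (τ ξ η) ζ)‖ = 1 := by rw [unital_norm uCst, hv1]
  have hRCv : ‖leg23 W (star (leg13 W') (m (τ ξ η) ζ))‖ = 1 := by rw [unital_norm uR, hCv]
  have hyv1 : ‖leg13 W (leg23 W (star (leg13 W') (m (τ ξ η) ζ)))‖ = 1 := by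
    rw [unital_norm uQ, hRCv]
  -- distance estimates
  have hQCv : leg13 W (star (leg13 W') (m (τ ξ η) ζ))
      = leg12 Sg (m' η ((W * star W') (τ ξ ζ))) := by
    rw [starleg13]
    have h4 : leg13 W (leg13 (star W') (m (τ ξ η) ζ)) = leg13 (W * star W') (m (τ ξ η) ζ) := by
      have := congrArg (fun A : H3 →L[ℂ] H3 => A (m (τ ξ η) ζ)) (leg13mul W (star W'))
      simpa only [ContinuousLinearMap.mul_apply] using this
    rw [h4, leg13eval]
  have hvSg : m (τ ξ η) ζ = leg12 Sg (m' η (τ ξ ζ)) := by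
    rw [← hmm' η ξ ζ, hleg12, hSg]
  have hnm' : ∀ t : H2, ‖m' η t‖ = ‖t‖ := by
    intro t
    refine norm_eq_of_inner_eq ?_
    rw [I2, inner_self_eq_norm_sq_to_K, hη]
    norm_num
  have hterm1 : ‖leg13 W (star (leg13 W') (m (τ ξ η) ζ)) - m (τ ξ η) ζ‖
      = ‖(W * star W') (τ ξ ζ) - τ ξ ζ‖ := by
    rw [hQCv]
    conv_lhs => rw [hvSg]
    rw [← map_sub, unital_norm uSg12, ← map_sub, hnm']
  have hstep : ‖leg13 W (leg23 W (star (leg13 W') (m (τ ξ η) ζ)))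
        - leg13 W (star (leg13 W') (m (τ ξ η) ζ))‖
      = ‖leg23 W (star (leg13 W') (m (τ ξ η) ζ)) - star (leg13 W') (m (τ ξ η) ζ)‖ := by
    rw [← map_sub, unital_norm uQ]
  have htri : ‖leg13 W (leg23 W (star (leg13 W') (m (τ ξ η) ζ))) - m (τ ξ η) ζ‖
      ≤ ‖(W * star W') (τ ξ ζ) - τ ξ ζ‖
        + ‖leg23 W (star (leg13 W') (m (τ ξ η) ζ)) - star (leg13 W') (m (τ ξ η) ζ)‖ := by
    have hd := dist_triangle (leg13 W (leg23 W (star (leg13 W') (m (τ ξ η) ζ))))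
      (leg13 W (star (leg13 W') (m (τ ξ η) ζ))) (m (τ ξ η) ζ)
    simp only [dist_eq_norm] at hd
    rw [hstep, hterm1] at hd
    linarith
  -- final numeric estimate
  have hTyv : ‖leg23 (ρ X) (leg13 W (leg23 W (star (leg13 W') (m (τ ξ η) ζ)))
        - m (τ ξ η) ζ)‖
      ≤ ‖X‖ * ‖leg13 W (leg23 W (star (leg13 W') (m (τ ξ η) ζ))) - m (τ ξ η) ζ‖ := by
    refine le_trans ((leg23 (ρ X)).le_opNorm _) ?_
    exact mul_le_mul_of_nonneg_right (Phinorm X) (norm_nonneg _)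
  have hTv : ‖leg23 (ρ X) (m (τ ξ η) ζ)‖ ≤ ‖X‖ := by
    refine le_trans ((leg23 (ρ X)).le_opNorm _) ?_
    rw [hv1, mul_one]
    exact Phinorm X
  have hsplit : ⟪leg23 (ρ X) (leg13 W (leg23 W (star (leg13 W') (m (τ ξ η) ζ)))),
        leg13 W (leg23 W (star (leg13 W') (m (τ ξ η) ζ)))⟫
        - ⟪leg23 (ρ X) (m (τ ξ η) ζ), m (τ ξ η) ζ⟫
      = ⟪leg23 (ρ X) (leg13 W (leg23 W (star (leg13 W') (m (τ ξ η) ζ))) - m (τ ξ η) ζ),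
          leg13 W (leg23 W (star (leg13 W') (m (τ ξ η) ζ)))⟫
        + ⟪leg23 (ρ X) (m (τ ξ η) ζ),
            leg13 W (leg23 W (star (leg13 W') (m (τ ξ η) ζ))) - m (τ ξ η) ζ⟫ := by
    simp only [map_sub, inner_sub_left, inner_sub_right]
    ring
  rw [hsplit]
  have b1 : ‖⟪leg23 (ρ X) (leg13 W (leg23 W (star (leg13 W') (m (τ ξ η) ζ))) - m (τ ξ η) ζ),
        leg13 W (leg23 W (star (leg13 W') (m (τ ξ η) ζ)))⟫‖
      ≤ ‖X‖ * ‖leg13 W (leg23 W (star (leg13 W') (m (τ ξ η) ζ))) - m (τ ξ η) ζ‖ := by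
    refine le_trans (norm_inner_le_norm _ _) ?_
    rw [hyv1, mul_one]
    exact hTyv
  have b2 : ‖⟪leg23 (ρ X) (m (τ ξ η) ζ),
        leg13 W (leg23 W (star (leg13 W') (m (τ ξ η) ζ))) - m (τ ξ η) ζ⟫‖
      ≤ ‖X‖ * ‖leg13 W (leg23 W (star (leg13 W') (m (τ ξ η) ζ))) - m (τ ξ η) ζ‖ := by
    refine le_trans (norm_inner_le_norm _ _) ?_
    exact mul_le_mul_of_nonneg_right hTv (norm_nonneg _)
  refine le_trans (norm_add_le _ _) ?_
  have hXnn : (0 : ℝ) ≤ ‖X‖ := norm_nonneg X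
  nlinarith [norm_nonneg (leg13 W (leg23 W (star (leg13 W') (m (τ ξ η) ζ))) - m (τ ξ η) ζ)]
end
end

section
/- Suppose that W''₂₃ commutes with W'₁₃, and let Λ be a bounded operator on H⊗H such that Λ₁₃ commutes with W'₁₂. Let ζ, ξ, η ∈ H be unit vectors and set u := ζ⊗ξ⊗η ∈ H⊗H⊗H. Then |⟨Λ₁₃ W''₁₃W'₁₃W''₂₃W₂₃u, W''₁₃W'₁₃W''₂₃W₂₃u⟩ − ⟨Λ₁₃ W''₂₃W₂₃u, W''₂₃W₂₃u⟩| ≤ 2‖Λ‖ ( ‖W'₂₃*W₂₃u − u‖ + ‖W'₁₂u − u‖ + ‖W₂₃*W'₂₃u − u‖ ). -/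
noncomputable section

open scoped ComplexConjugate

private lemma dense_zero {E F : Type*} [NormedAddCommGroup E] [NormedSpace ℂ E]
    [NormedAddCommGroup F] [Module ℂ F] (σ : ℂ →+* ℂ) (s : Set E)
    (hd : Dense (Submodule.span ℂ s : Set E)) (D : E → F) (hc : Continuous D)
    (ha : ∀ x y, D (x + y) = D x + D y) (hs : ∀ (c : ℂ) x, D (c • x) = σ c • D x)
    (hz : ∀ y ∈ s, D y = 0) : ∀ x, D x = 0 := by
  have h0 : D 0 = 0 := by
    have h := ha 0 0
    rw [add_zero] at h
    nth_rewrite 1 [← add_zero (D 0)] at h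
    exact (add_left_cancel h).symm
  have hspan : ∀ x ∈ Submodule.span ℂ s, D x = 0 := by
    intro x hx
    induction hx using Submodule.span_induction with
    | mem y hy => exact hz y hy
    | zero => exact h0
    | add x y _ _ hx hy => rw [ha, hx, hy, add_zero]
    | smul c x _ hx => rw [hs, hx, smul_zero]
  intro x
  have hxcl : x ∈ closure (Submodule.span ℂ s : Set E) := by
    rw [hd.closure_eq]; trivial
  have hclosed : IsClosed {y : E | D y = 0} := isClosed_eq hc continuous_const
  exact (hclosed.closure_subset_iff.mpr hspan) hxcl

section ConjMaps

variable {E : Type*} [NormedAddCommGroup E] [InnerProductSpace ℂ E]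

private lemma conj_sub {F : E → E} (ha : ∀ x y, F (x + y) = F x + F y)
    (hs : ∀ (c : ℂ) x, F (c • x) = conj c • F x) (x y : E) : F (x - y) = F x - F y := by
  have : F (x + (-1 : ℂ) • y) = F x + conj (-1 : ℂ) • F y := by rw [ha, hs]
  simpa [sub_eq_add_neg, neg_smul] using this

private lemma conj_cont {F : E → E} (ha : ∀ x y, F (x + y) = F x + F y)
    (hs : ∀ (c : ℂ) x, F (c • x) = conj c • F x) (hn : ∀ x, ‖F x‖ = ‖x‖) :
    Continuous F := by
  have : Isometry F := by
    apply Isometry.of_dist_eq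
    intro a b
    rw [dist_eq_norm, dist_eq_norm, ← conj_sub ha hs, hn]
  exact this.continuous

private lemma conj_inner {F : E → E} (ha : ∀ x y, F (x + y) = F x + F y)
    (hs : ∀ (c : ℂ) x, F (c • x) = conj c • F x) (hn : ∀ x, ‖F x‖ = ‖x‖) (x y : E) :
    (inner ℂ (F x) (F y) : ℂ) = inner ℂ y x := by
  have hre : ∀ a b : E, 2 * Complex.re (inner ℂ a b : ℂ) = ‖a + b‖ ^ 2 - ‖a‖ ^ 2 - ‖b‖ ^ 2 := by
    intro a b
    have := norm_add_sq (𝕜 := ℂ) a b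
    rw [RCLike.re_to_complex] at this
    linarith
  have key : ∀ a b : E, Complex.re (inner ℂ (F a) (F b) : ℂ) = Complex.re (inner ℂ a b : ℂ) := by
    intro a b
    have h1 := hre (F a) (F b)
    have h2 := hre a b
    rw [← ha, hn, hn, hn] at h1
    linarith
  have hsymm : (inner ℂ y x : ℂ) = conj (inner ℂ x y : ℂ) := (inner_conj_symm y x).symm
  apply Complex.ext
  · rw [key x y, hsymm]
    exact (Complex.conj_re (inner ℂ x y : ℂ)).symm
  · have h1 : Complex.re (inner ℂ (F x) (F (Complex.I • y)) : ℂ)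
        = Complex.re (inner ℂ x (Complex.I • y) : ℂ) := key x (Complex.I • y)
    rw [hs, inner_smul_right, inner_smul_right] at h1
    have lhs1 : Complex.re (conj Complex.I * (inner ℂ (F x) (F y) : ℂ))
        = Complex.im (inner ℂ (F x) (F y) : ℂ) := by
      simp [Complex.ext_iff]
    have rhs1 : Complex.re (Complex.I * (inner ℂ x y : ℂ)) = - Complex.im (inner ℂ x y : ℂ) := by
      simp
    rw [lhs1, rhs1] at h1
    rw [h1, hsymm]
    exact (Complex.conj_im (inner ℂ x y : ℂ)).symm

end ConjMaps

private lemma isom_of_star_mul_self {E : Type*} [NormedAddCommGroup E] [InnerProductSpace ℂ E]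
    [CompleteSpace E] {A : E →L[ℂ] E} (h : star A * A = 1) (z : E) : ‖A z‖ = ‖z‖ := by
  have h1 : (inner ℂ (A z) (A z) : ℂ) = inner ℂ z z := by
    have h2 : (inner ℂ z ((ContinuousLinearMap.adjoint A) (A z)) : ℂ) = inner ℂ (A z) (A z) :=
      ContinuousLinearMap.adjoint_inner_right A z (A z)
    have h3 : (ContinuousLinearMap.adjoint A) (A z) = z := by
      have := congrArg (fun T : E →L[ℂ] E => T z) h
      simpa [ContinuousLinearMap.star_eq_adjoint] using this
    rw [h3] at h2
    exact h2.symm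
  rw [inner_self_eq_norm_sq_to_K, inner_self_eq_norm_sq_to_K] at h1
  have h5 : ‖A z‖ ^ 2 = ‖z‖ ^ 2 := by exact_mod_cast h1
  nlinarith [norm_nonneg (A z), norm_nonneg z]

set_option maxHeartbeats 4000000 in
theorem stmt_13
    {H H2 H3 : Type*}
    [NormedAddCommGroup H] [InnerProductSpace ℂ H] [CompleteSpace H]
    [NormedAddCommGroup H2] [InnerProductSpace ℂ H2] [CompleteSpace H2]
    [NormedAddCommGroup H3] [InnerProductSpace ℂ H3] [CompleteSpace H3]
    -- the tensor map H × H → H ⊗ H = H2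
    (τ : H →L[ℂ] H →L[ℂ] H2)
    (hτinner : ∀ a b c d : H, (inner ℂ (τ a b) (τ c d) : ℂ) = (inner ℂ a c : ℂ) * (inner ℂ b d : ℂ))
    (hτdense : Dense (Submodule.span ℂ (Set.range fun p : H × H => τ p.1 p.2) : Set H2))
    -- the tensor maps (H ⊗ H) × H → H ⊗ H ⊗ H = H3 and H × (H ⊗ H) → H ⊗ H ⊗ H
    (m : H2 →L[ℂ] H →L[ℂ] H3)
    (m' : H →L[ℂ] H2 →L[ℂ] H3)
    (hmm' : ∀ a b c : H, m (τ a b) c = m' a (τ b c))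
    (hminner : ∀ (u v : H2) (c d : H), (inner ℂ (m u c) (m v d) : ℂ) = (inner ℂ u v : ℂ) * (inner ℂ c d : ℂ))
    (hmdense : Dense (Submodule.span ℂ (Set.range fun p : (H × H) × H => m (τ p.1.1 p.1.2) p.2) : Set H3))
    -- the leg maps T ↦ T₁₂ = T ⊗ 1, T ↦ T₂₃ = 1 ⊗ T, T ↦ T₁₃ = (Σ⊗1)(1⊗T)(Σ⊗1)
    (leg12 leg23 leg13 : (H2 →L[ℂ] H2) → (H3 →L[ℂ] H3))
    (hleg12 : ∀ (T : H2 →L[ℂ] H2) (u : H2) (c : H), leg12 T (m u c) = m (T u) c)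
    (hleg23 : ∀ (T : H2 →L[ℂ] H2) (a : H) (v : H2), leg23 T (m' a v) = m' a (T v))
    -- the flip unitary Σ on H ⊗ H
    (Sg : H2 →L[ℂ] H2)
    (hSg : ∀ a b : H, Sg (τ a b) = τ b a)
    (hleg13 : ∀ T : H2 →L[ℂ] H2, leg13 T = leg12 Sg * leg23 T * leg12 Sg)
    -- the multiplicative unitary W, satisfying the pentagonal equation
    (W : H2 →L[ℂ] H2)
    (hWl : W * star W = 1) (hWr : star W * W = 1)
    (hPent : leg12 W * leg13 W * leg23 W = leg23 W * leg12 W)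
    -- J : a conjugate-linear isometric involution of H
    (J : H → H)
    (hJadd : ∀ x y : H, J (x + y) = J x + J y)
    (hJsmul : ∀ (c : ℂ) (x : H), J (c • x) = (starRingEnd ℂ) c • J x)
    (hJnorm : ∀ x : H, ‖J x‖ = ‖x‖)
    (hJinv : ∀ x : H, J (J x) = x)
    -- Jh : a conjugate-linear isometric involution of H
    (Jh : H → H)
    (hJhadd : ∀ x y : H, Jh (x + y) = Jh x + Jh y)
    (hJhsmul : ∀ (c : ℂ) (x : H), Jh (c • x) = (starRingEnd ℂ) c • Jh x)
    (hJhnorm : ∀ x : H, ‖Jh x‖ = ‖x‖)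
    (hJhinv : ∀ x : H, Jh (Jh x) = x)
    -- JJ : the conjugate-linear involution J⊗J of H ⊗ H
    (JJ : H2 → H2)
    (hJJadd : ∀ x y : H2, JJ (x + y) = JJ x + JJ y)
    (hJJsmul : ∀ (c : ℂ) (x : H2), JJ (c • x) = (starRingEnd ℂ) c • JJ x)
    (hJJnorm : ∀ x : H2, ‖JJ x‖ = ‖x‖)
    (hJJinv : ∀ x : H2, JJ (JJ x) = x)
    (hJJtmul : ∀ a b : H, JJ (τ a b) = τ (J a) (J b))
    -- JJh : the conjugate-linear involution J⊗Ĵ of H ⊗ H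
    (JJh : H2 → H2)
    (hJJhadd : ∀ x y : H2, JJh (x + y) = JJh x + JJh y)
    (hJJhsmul : ∀ (c : ℂ) (x : H2), JJh (c • x) = (starRingEnd ℂ) c • JJh x)
    (hJJhnorm : ∀ x : H2, ‖JJh x‖ = ‖x‖)
    (hJJhinv : ∀ x : H2, JJh (JJh x) = x)
    (hJJhtmul : ∀ a b : H, JJh (τ a b) = τ (J a) (Jh b))
    -- JhJ : the conjugate-linear involution Ĵ⊗J of H ⊗ H
    (JhJ : H2 → H2)
    (hJhJadd : ∀ x y : H2, JhJ (x + y) = JhJ x + JhJ y)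
    (hJhJsmul : ∀ (c : ℂ) (x : H2), JhJ (c • x) = (starRingEnd ℂ) c • JhJ x)
    (hJhJnorm : ∀ x : H2, ‖JhJ x‖ = ‖x‖)
    (hJhJinv : ∀ x : H2, JhJ (JhJ x) = x)
    (hJhJtmul : ∀ a b : H, JhJ (τ a b) = τ (Jh a) (J b))
    -- the assumption W* = (Ĵ⊗J) W (Ĵ⊗J)
    (hWstar : ∀ x : H2, (star W) x = JhJ (W (JhJ x)))
    -- W' = (J⊗J) W (J⊗J), the commutant multiplicative unitary
    (W' : H2 →L[ℂ] H2)
    (hW' : ∀ x : H2, W' x = JJ (W (JJ x)))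
    -- W'' = (J⊗Ĵ) W (J⊗Ĵ) (in the quantum group setting, W'' = (W'ᵒᵖ)*)
    (W'' : H2 →L[ℂ] H2)
    (hW'' : ∀ x : H2, W'' x = JJh (W (JJh x)))
    -- W''₂₃ commutes with W'₁₃
    (hcomm : Commute (leg23 W'') (leg13 W'))
    -- Λ such that Λ₁₃ commutes with W'₁₂
    (Λ : H2 →L[ℂ] H2)
    (hΛcomm : Commute (leg13 Λ) (leg12 W'))
    -- unit vectors ζ, ξ, η; u = ζ⊗ξ⊗η
    (ζ ξ η : H) (hζ : ‖ζ‖ = 1) (hξ : ‖ξ‖ = 1) (hη : ‖η‖ = 1)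
    (u : H3) (hu : u = m (τ ζ ξ) η) :
    ‖((inner ℂ (leg13 Λ ((leg13 W'' * leg13 W' * leg23 W'' * leg23 W) u))
          ((leg13 W'' * leg13 W' * leg23 W'' * leg23 W) u) : ℂ)
        - (inner ℂ (leg13 Λ ((leg23 W'' * leg23 W) u)) ((leg23 W'' * leg23 W) u) : ℂ))‖ ≤
      2 * ‖Λ‖ * (‖star (leg23 W') (leg23 W u) - u‖
        + ‖leg12 W' u - u‖
        + ‖star (leg23 W) (leg23 W' u) - u‖) := by
  set cj := starRingEnd ℂ with hcj
  -- antiunitarity of the involutions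
  have hJinner : ∀ x y : H, (inner ℂ (J x) (J y) : ℂ) = inner ℂ y x :=
    conj_inner hJadd hJsmul hJnorm
  have hJJinner : ∀ x y : H2, (inner ℂ (JJ x) (JJ y) : ℂ) = inner ℂ y x :=
    conj_inner hJJadd hJJsmul hJJnorm
  have hJJhinner : ∀ x y : H2, (inner ℂ (JJh x) (JJh y) : ℂ) = inner ℂ y x :=
    conj_inner hJJhadd hJJhsmul hJJhnorm
  have hJJswap : ∀ s t : H2, (inner ℂ (JJ s) t : ℂ) = inner ℂ (JJ t) s := by
    intro s t
    have h := hJJinner s (JJ t)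
    rwa [hJJinv t] at h
  have hJJswap' : ∀ s t : H2, (inner ℂ s (JJ t) : ℂ) = inner ℂ t (JJ s) := by
    intro s t
    rw [← inner_conj_symm, hJJswap, inner_conj_symm]
  have hJJhswap : ∀ s t : H2, (inner ℂ (JJh s) t : ℂ) = inner ℂ (JJh t) s := by
    intro s t
    have h := hJJhinner s (JJh t)
    rwa [hJJhinv t] at h
  have hJJhswap' : ∀ s t : H2, (inner ℂ s (JJh t) : ℂ) = inner ℂ t (JJh s) := by
    intro s t
    rw [← inner_conj_symm, hJJhswap, inner_conj_symm]
  -- extensionality lemmas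
  have vecext3 : ∀ x y : H3, (∀ a b c : H,
      (inner ℂ (m (τ a b) c) x : ℂ) = inner ℂ (m (τ a b) c) y) → x = y := by
    intro x y h
    have hz := dense_zero cj _ hmdense (fun z : H3 => (inner ℂ z (x - y) : ℂ))
      (by exact Continuous.inner continuous_id continuous_const)
      (fun z w => by show (inner ℂ (z + w) (x - y) : ℂ) = _ + _; rw [inner_add_left])
      (fun c z => by show (inner ℂ (c • z) (x - y) : ℂ) = cj c • (inner ℂ z (x - y) : ℂ)
                     rw [inner_smul_left]; rfl)
      (by rintro z ⟨p, rfl⟩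
          show (inner ℂ (m (τ p.1.1 p.1.2) p.2) (x - y) : ℂ) = 0
          rw [inner_sub_right, h p.1.1 p.1.2 p.2, sub_self])
    have h0 := hz (x - y)
    rw [inner_self_eq_zero] at h0
    exact sub_eq_zero.mp h0
  have vecext2 : ∀ x y : H2, (∀ a b : H,
      (inner ℂ (τ a b) x : ℂ) = inner ℂ (τ a b) y) → x = y := by
    intro x y h
    have hz := dense_zero cj _ hτdense (fun z : H2 => (inner ℂ z (x - y) : ℂ))
      (by exact Continuous.inner continuous_id continuous_const)
      (fun z w => by show (inner ℂ (z + w) (x - y) : ℂ) = _ + _; rw [inner_add_left])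
      (fun c z => by show (inner ℂ (c • z) (x - y) : ℂ) = cj c • (inner ℂ z (x - y) : ℂ)
                     rw [inner_smul_left]; rfl)
      (by rintro z ⟨p, rfl⟩
          show (inner ℂ (τ p.1 p.2) (x - y) : ℂ) = 0
          rw [inner_sub_right, h p.1 p.2, sub_self])
    have h0 := hz (x - y)
    rw [inner_self_eq_zero] at h0
    exact sub_eq_zero.mp h0
  have opext3 : ∀ S T : H3 →L[ℂ] H3,
      (∀ a b c : H, S (m (τ a b) c) = T (m (τ a b) c)) → S = T := by
    intro S T h
    have hz := dense_zero (RingHom.id ℂ) _ hmdense (fun z : H3 => S z - T z)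
      (S.continuous.sub T.continuous)
      (fun z w => by show S (z + w) - T (z + w) = _ + _; rw [map_add, map_add]; abel)
      (fun c z => by show S (c • z) - T (c • z) = (RingHom.id ℂ) c • (S z - T z)
                     rw [map_smul, map_smul, smul_sub]; rfl)
      (by rintro z ⟨p, rfl⟩
          show S (m (τ p.1.1 p.1.2) p.2) - T (m (τ p.1.1 p.1.2) p.2) = 0
          rw [h p.1.1 p.1.2 p.2, sub_self])
    exact ContinuousLinearMap.ext fun z => sub_eq_zero.mp (hz z)
  have opext2 : ∀ S T : H2 →L[ℂ] H2,
      (∀ a b : H, S (τ a b) = T (τ a b)) → S = T := by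
    intro S T h
    have hz := dense_zero (RingHom.id ℂ) _ hτdense (fun z : H2 => S z - T z)
      (S.continuous.sub T.continuous)
      (fun z w => by show S (z + w) - T (z + w) = _ + _; rw [map_add, map_add]; abel)
      (fun c z => by show S (c • z) - T (c • z) = (RingHom.id ℂ) c • (S z - T z)
                     rw [map_smul, map_smul, smul_sub]; rfl)
      (by rintro z ⟨p, rfl⟩
          show S (τ p.1 p.2) - T (τ p.1 p.2) = 0
          rw [h p.1 p.2, sub_self])
    exact ContinuousLinearMap.ext fun z => sub_eq_zero.mp (hz z)
  -- extended inner product identity for m'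
  have hm'inner : ∀ (p a : H) (w v : H2),
      (inner ℂ (m' p w) (m' a v) : ℂ) = inner ℂ p a * inner ℂ w v := by
    have step1 : ∀ (p a b c d e : H), (inner ℂ (m' p (τ b c)) (m' a (τ d e)) : ℂ)
        = inner ℂ p a * inner ℂ (τ b c) (τ d e) := by
      intro p a b c d e
      rw [← hmm', ← hmm', hminner, hτinner, hτinner]
      ring
    have step2 : ∀ (p a d e : H) (w : H2), (inner ℂ (m' p w) (m' a (τ d e)) : ℂ)
        = inner ℂ p a * inner ℂ w (τ d e) := by
      intro p a d e
      have hz := dense_zero cj _ hτdense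
        (fun w : H2 => (inner ℂ (m' p w) (m' a (τ d e)) : ℂ) - inner ℂ p a * inner ℂ w (τ d e))
        (((m' p).continuous.inner continuous_const).sub
          (continuous_const.mul (continuous_id.inner continuous_const)))
        (fun w1 w2 => by
          show (inner ℂ (m' p (w1 + w2)) (m' a (τ d e)) : ℂ) - inner ℂ p a * inner ℂ (w1 + w2) (τ d e)
            = _ + _
          rw [map_add, inner_add_left, inner_add_left]; ring)
        (fun c w => by
          show (inner ℂ (m' p (c • w)) (m' a (τ d e)) : ℂ) - inner ℂ p a * inner ℂ (c • w) (τ d e)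
            = cj c • _
          rw [map_smul, inner_smul_left, inner_smul_left, smul_eq_mul]; ring)
        (by rintro z ⟨q, rfl⟩
            show (inner ℂ (m' p (τ q.1 q.2)) (m' a (τ d e)) : ℂ)
              - inner ℂ p a * inner ℂ (τ q.1 q.2) (τ d e) = 0
            rw [step1, sub_self])
      intro w
      exact sub_eq_zero.mp (hz w)
    intro p a w v
    have hz := dense_zero (RingHom.id ℂ) _ hτdense
      (fun v : H2 => (inner ℂ (m' p w) (m' a v) : ℂ) - inner ℂ p a * inner ℂ w v)
      ((continuous_const.inner (m' a).continuous).sub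
        (continuous_const.mul (continuous_const.inner continuous_id)))
      (fun v1 v2 => by
        show (inner ℂ (m' p w) (m' a (v1 + v2)) : ℂ) - inner ℂ p a * inner ℂ w (v1 + v2) = _ + _
        rw [map_add, inner_add_right, inner_add_right]; ring)
      (fun c v => by
        show (inner ℂ (m' p w) (m' a (c • v)) : ℂ) - inner ℂ p a * inner ℂ w (c • v)
          = (RingHom.id ℂ) c • _
        rw [map_smul, inner_smul_right, inner_smul_right, RingHom.id_apply, smul_eq_mul]; ring)
      (by rintro z ⟨q, rfl⟩
          show (inner ℂ (m' p w) (m' a (τ q.1 q.2)) : ℂ) - inner ℂ p a * inner ℂ w (τ q.1 q.2) = 0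
          rw [step2, sub_self])
    exact sub_eq_zero.mp (hz v)
  -- leg23 on elementary m-form vectors
  have hleg23gen : ∀ (X : H2 →L[ℂ] H2) (a b c : H),
      leg23 X (m (τ a b) c) = m' a (X (τ b c)) := by
    intro X a b c
    rw [hmm', hleg23]
  -- multiplicativity and unitality of the legs
  have hleg12one : leg12 1 = 1 := by
    apply opext3
    intro a b c
    rw [hleg12, ContinuousLinearMap.one_apply, ContinuousLinearMap.one_apply]
  have hleg23one : leg23 1 = 1 := by
    apply opext3
    intro a b c
    rw [hleg23gen, ContinuousLinearMap.one_apply, ContinuousLinearMap.one_apply, hmm']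
  have hleg12mul : ∀ X Y : H2 →L[ℂ] H2, leg12 (X * Y) = leg12 X * leg12 Y := by
    intro X Y
    apply opext3
    intro a b c
    rw [hleg12, ContinuousLinearMap.mul_apply, ContinuousLinearMap.mul_apply, hleg12, hleg12]
  have hleg23mul : ∀ X Y : H2 →L[ℂ] H2, leg23 (X * Y) = leg23 X * leg23 Y := by
    intro X Y
    apply opext3
    intro a b c
    simp only [ContinuousLinearMap.mul_apply, hleg23gen, hleg23]
  have hleg23add : ∀ X Y : H2 →L[ℂ] H2, leg23 (X + Y) = leg23 X + leg23 Y := by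
    intro X Y
    apply opext3
    intro a b c
    simp only [ContinuousLinearMap.add_apply, hleg23gen, map_add]
  have hleg23smul : ∀ (c : ℂ) (X : H2 →L[ℂ] H2), leg23 (c • X) = c • leg23 X := by
    intro c X
    apply opext3
    intro a b c'
    simp only [ContinuousLinearMap.smul_apply, hleg23gen, map_smul]
  have hleg23zero : leg23 0 = 0 := by
    apply opext3
    intro a b c
    simp only [ContinuousLinearMap.zero_apply, hleg23gen, map_zero]
  -- star compatibility
  have hleg12star : ∀ X : H2 →L[ℂ] H2, leg12 (star X) = star (leg12 X) := by
    intro X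
    apply opext3
    intro a b c
    apply vecext3
    intro p q r
    have L : (inner ℂ (m (τ p q) r) (leg12 (star X) (m (τ a b) c)) : ℂ)
        = inner ℂ (X (τ p q)) (τ a b) * inner ℂ r c := by
      rw [hleg12, hminner, ContinuousLinearMap.star_eq_adjoint,
        ContinuousLinearMap.adjoint_inner_right]
    have R : (inner ℂ (m (τ p q) r) (star (leg12 X) (m (τ a b) c)) : ℂ)
        = inner ℂ (X (τ p q)) (τ a b) * inner ℂ r c := by
      rw [ContinuousLinearMap.star_eq_adjoint, ContinuousLinearMap.adjoint_inner_right,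
        hleg12, hminner]
    rw [L, R]
  have hleg23star : ∀ X : H2 →L[ℂ] H2, leg23 (star X) = star (leg23 X) := by
    intro X
    apply opext3
    intro a b c
    apply vecext3
    intro p q r
    have L : (inner ℂ (m (τ p q) r) (leg23 (star X) (m (τ a b) c)) : ℂ)
        = inner ℂ p a * inner ℂ (X (τ q r)) (τ b c) := by
      rw [hleg23gen, hmm', hm'inner, ContinuousLinearMap.star_eq_adjoint,
        ContinuousLinearMap.adjoint_inner_right]
    have R : (inner ℂ (m (τ p q) r) (star (leg23 X) (m (τ a b) c)) : ℂ)
        = inner ℂ p a * inner ℂ (X (τ q r)) (τ b c) := by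
      rw [ContinuousLinearMap.star_eq_adjoint, ContinuousLinearMap.adjoint_inner_right,
        hleg23gen, hmm' a b c, hm'inner]
    rw [L, R]
  -- facts about the flip
  have hSgSg : Sg * Sg = 1 := by
    apply opext2
    intro a b
    rw [ContinuousLinearMap.mul_apply, hSg, hSg, ContinuousLinearMap.one_apply]
  have hSgstar : star Sg = Sg := by
    apply opext2
    intro a b
    apply vecext2
    intro p q
    have L : (inner ℂ (τ p q) (star Sg (τ a b)) : ℂ) = inner ℂ (τ q p) (τ a b) := by
      rw [ContinuousLinearMap.star_eq_adjoint, ContinuousLinearMap.adjoint_inner_right, hSg]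
    rw [L, hSg, hτinner, hτinner]
    ring
  have hSS : leg12 Sg * leg12 Sg = 1 := by
    rw [← hleg12mul, hSgSg, hleg12one]
  have hSScancel : ∀ Z : H3 →L[ℂ] H3, leg12 Sg * (leg12 Sg * Z) = Z := by
    intro Z
    rw [← mul_assoc, hSS, one_mul]
  have hleg13mul : ∀ X Y : H2 →L[ℂ] H2, leg13 X * leg13 Y = leg13 (X * Y) := by
    intro X Y
    rw [hleg13, hleg13, hleg13, hleg23mul]
    calc leg12 Sg * leg23 X * leg12 Sg * (leg12 Sg * leg23 Y * leg12 Sg)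
        = leg12 Sg * leg23 X * (leg12 Sg * (leg12 Sg * (leg23 Y * leg12 Sg))) := by
          simp only [mul_assoc]
      _ = leg12 Sg * leg23 X * (leg23 Y * leg12 Sg) := by rw [hSScancel]
      _ = leg12 Sg * (leg23 X * leg23 Y) * leg12 Sg := by simp only [mul_assoc]
  have hleg13star : ∀ X : H2 →L[ℂ] H2, star (leg13 X) = leg13 (star X) := by
    intro X
    have hSgstar13 : star (leg12 Sg) = leg12 Sg := by rw [← hleg12star, hSgstar]
    rw [hleg13, hleg13, star_mul, star_mul, hSgstar13, ← hleg23star, mul_assoc]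
  -- norm bound for leg23 and leg13
  have hφ23 : ∀ X : H2 →L[ℂ] H2, ‖leg23 X‖ ≤ ‖X‖ := by
    intro X
    exact NonUnitalStarAlgHom.norm_apply_le
      ({ toFun := leg23
         map_smul' := hleg23smul
         map_zero' := hleg23zero
         map_add' := hleg23add
         map_mul' := hleg23mul
         map_star' := fun Y => by rw [← hleg23star] } :
        (H2 →L[ℂ] H2) →⋆ₙₐ[ℂ] (H3 →L[ℂ] H3)) X
  -- isometry of unitaries
  have hiso : ∀ A : H3 →L[ℂ] H3, star A * A = 1 → ∀ z, ‖A z‖ = ‖z‖ :=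
    fun A h z => isom_of_star_mul_self h z
  have hSgiso : ∀ z, ‖leg12 Sg z‖ = ‖z‖ := by
    apply hiso
    rw [← hleg12star, hSgstar, hSS]
  have hΛ13 : ∀ z : H3, ‖leg13 Λ z‖ ≤ ‖Λ‖ * ‖z‖ := by
    intro z
    rw [hleg13, ContinuousLinearMap.mul_apply, ContinuousLinearMap.mul_apply, hSgiso]
    calc ‖leg23 Λ (leg12 Sg z)‖ ≤ ‖leg23 Λ‖ * ‖leg12 Sg z‖ := (leg23 Λ).le_opNorm _
      _ ≤ ‖Λ‖ * ‖leg12 Sg z‖ := by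
          gcongr
          exact hφ23 Λ
      _ = ‖Λ‖ * ‖z‖ := by rw [hSgiso]
  -- pointwise unit equations for W
  have hWr' : ∀ z : H2, (star W) (W z) = z := by
    intro z
    have := congrArg (fun T : H2 →L[ℂ] H2 => T z) hWr
    simpa using this
  have hWl' : ∀ z : H2, W ((star W) z) = z := by
    intro z
    have := congrArg (fun T : H2 →L[ℂ] H2 => T z) hWl
    simpa using this
  -- adjoints of W' and W''
  have hstarW' : ∀ y : H2, (star W') y = JJ ((star W) (JJ y)) := by
    intro y
    apply ext_inner_left ℂ
    intro v
    rw [ContinuousLinearMap.star_eq_adjoint, ContinuousLinearMap.adjoint_inner_right, hW']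
    calc (inner ℂ (JJ (W (JJ v))) y : ℂ) = inner ℂ (JJ y) (W (JJ v)) := hJJswap _ _
      _ = inner ℂ ((star W) (JJ y)) (JJ v) := by
          rw [ContinuousLinearMap.star_eq_adjoint, ContinuousLinearMap.adjoint_inner_left]
      _ = inner ℂ v (JJ ((star W) (JJ y))) := hJJswap' _ _
  have hstarW'' : ∀ y : H2, (star W'') y = JJh ((star W) (JJh y)) := by
    intro y
    apply ext_inner_left ℂ
    intro v
    rw [ContinuousLinearMap.star_eq_adjoint, ContinuousLinearMap.adjoint_inner_right, hW'']
    calc (inner ℂ (JJh (W (JJh v))) y : ℂ) = inner ℂ (JJh y) (W (JJh v)) := hJJhswap _ _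
      _ = inner ℂ ((star W) (JJh y)) (JJh v) := by
          rw [ContinuousLinearMap.star_eq_adjoint, ContinuousLinearMap.adjoint_inner_left]
      _ = inner ℂ v (JJh ((star W) (JJh y))) := hJJhswap' _ _
  -- unitarity of W' and W''
  have hW'r : star W' * W' = 1 := by
    apply ContinuousLinearMap.ext
    intro z
    rw [ContinuousLinearMap.mul_apply, ContinuousLinearMap.one_apply, hW', hstarW', hJJinv,
      hWr', hJJinv]
  have hW'l : W' * star W' = 1 := by
    apply ContinuousLinearMap.ext
    intro z
    rw [ContinuousLinearMap.mul_apply, ContinuousLinearMap.one_apply, hstarW', hW', hJJinv,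
      hWl', hJJinv]
  have hW''r : star W'' * W'' = 1 := by
    apply ContinuousLinearMap.ext
    intro z
    rw [ContinuousLinearMap.mul_apply, ContinuousLinearMap.one_apply, hW'', hstarW'', hJJhinv,
      hWr', hJJhinv]
  have hW''l : W'' * star W'' = 1 := by
    apply ContinuousLinearMap.ext
    intro z
    rw [ContinuousLinearMap.mul_apply, ContinuousLinearMap.one_apply, hstarW'', hW'', hJJhinv,
      hWl', hJJhinv]
  -- construction of the conjugation K = J ⊗ J ⊗ J on H3
  have hJJcont : Continuous JJ := conj_cont hJJadd hJJsmul hJJnorm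
  obtain ⟨K, hK⟩ : ∃ K : H3 →SL[cj] H3, ∀ (w : H2) (c : H), K (m w c) = m (JJ w) (J c) := by
    set gen : (H × H) × H → H3 := fun p => m (τ p.1.1 p.1.2) p.2 with hgendef
    set kgen : (H × H) × H → H3 := fun p => m (τ (J p.1.1) (J p.1.2)) (J p.2) with hkgendef
    set π := Finsupp.linearCombination ℂ gen with hπdef
    set ψfun : ((H × H) × H →₀ ℂ) → H3 := fun l => l.sum fun p c => cj c • kgen p with hψdef
    have hψadd : ∀ l1 l2, ψfun (l1 + l2) = ψfun l1 + ψfun l2 := by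
      intro l1 l2
      apply Finsupp.sum_add_index' (fun p => by simp) (fun p c1 c2 => by simp [map_add, add_smul])
    have hψsmul : ∀ (c : ℂ) l, ψfun (c • l) = cj c • ψfun l := by
      intro c l
      rw [hψdef]
      simp only []
      rw [Finsupp.sum_smul_index (fun p => by simp), Finsupp.smul_sum]
      refine Finsupp.sum_congr ?_
      intro p _
      rw [map_mul, mul_smul]
    have hkg : ∀ p q, (inner ℂ (kgen p) (kgen q) : ℂ) = cj (inner ℂ (gen p) (gen q) : ℂ) := by
      intro p q
      have L : (inner ℂ (kgen p) (kgen q) : ℂ)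
          = inner ℂ q.1.1 p.1.1 * inner ℂ q.1.2 p.1.2 * inner ℂ q.2 p.2 := by
        rw [hkgendef]
        simp only []
        rw [hminner, hτinner, hJinner, hJinner, hJinner]
      have R : cj (inner ℂ (gen p) (gen q) : ℂ)
          = inner ℂ q.1.1 p.1.1 * inner ℂ q.1.2 p.1.2 * inner ℂ q.2 p.2 := by
        rw [hgendef, hcj]
        rw [hminner, hτinner, map_mul, map_mul, inner_conj_symm, inner_conj_symm,
          inner_conj_symm]
      rw [L, R]
    have hinner : ∀ l, (inner ℂ (ψfun l) (ψfun l) : ℂ) = cj (inner ℂ (π l) (π l) : ℂ) := by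
      intro l
      rw [hπdef]
      simp only [Finsupp.linearCombination_apply]
      rw [hψdef]
      simp only [Finsupp.sum]
      rw [sum_inner, sum_inner, map_sum]
      refine Finset.sum_congr rfl ?_
      intro p _
      rw [inner_sum, inner_sum, map_sum]
      refine Finset.sum_congr rfl ?_
      intro q _
      rw [inner_smul_left, inner_smul_right, inner_smul_left, inner_smul_right, hkg]
      simp only [hcj, map_mul, Complex.conj_conj]
    have hnormeq : ∀ l, ‖ψfun l‖ = ‖π l‖ := by
      intro l
      rw [norm_eq_sqrt_re_inner (𝕜 := ℂ) (ψfun l), norm_eq_sqrt_re_inner (𝕜 := ℂ) (π l)]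
      congr 1
      have := congrArg Complex.re (hinner l)
      simpa [hcj] using this
    have hker : LinearMap.ker π ≤ LinearMap.ker
        ({ toFun := ψfun, map_add' := hψadd, map_smul' := hψsmul } :
          ((H × H) × H →₀ ℂ) →ₛₗ[cj] H3) := by
      intro l hl
      rw [LinearMap.mem_ker] at hl ⊢
      have h1 : ‖ψfun l‖ = 0 := by rw [hnormeq, hl, norm_zero]
      exact norm_eq_zero.mp h1
    set ψ : ((H × H) × H →₀ ℂ) →ₛₗ[cj] H3 :=
      { toFun := ψfun, map_add' := hψadd, map_smul' := hψsmul } with hψsl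
    set K₀ : LinearMap.range π →ₛₗ[cj] H3 :=
      (Submodule.liftQ (LinearMap.ker π) ψ hker).comp
        (LinearMap.quotKerEquivRange π).symm.toLinearMap with hK₀def
    have hK₀ : ∀ (l : (H × H) × H →₀ ℂ) (h : π l ∈ LinearMap.range π),
        K₀ ⟨π l, h⟩ = ψfun l := by
      intro l h
      rw [hK₀def]
      simp only [LinearMap.comp_apply, LinearEquiv.coe_toLinearMap]
      rw [LinearMap.quotKerEquivRange_symm_apply_image, Submodule.mkQ_apply,
        Submodule.liftQ_apply]
      rfl
    have hK₀norm : ∀ z : LinearMap.range π, ‖K₀ z‖ ≤ 1 * ‖(z : H3)‖ := by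
      rintro ⟨z, hz⟩
      obtain ⟨l, rfl⟩ := hz
      rw [hK₀ l (LinearMap.mem_range_self π l), one_mul]
      exact le_of_eq (hnormeq l)
    set K₀c : LinearMap.range π →SL[cj] H3 := LinearMap.mkContinuous K₀ 1 hK₀norm with hK₀c
    set e : LinearMap.range π →L[ℂ] H3 := Submodule.subtypeL (LinearMap.range π) with hedef
    have hrange : (LinearMap.range π : Submodule ℂ H3)
        = Submodule.span ℂ (Set.range gen) := by
      rw [hπdef]
      exact Finsupp.range_linearCombination ℂ
    have hdense : DenseRange e := by
      have h1 : Set.range e = (LinearMap.range π : Set H3) := Subtype.range_coe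
      rw [DenseRange, h1, hrange]
      exact hmdense
    have huind : IsUniformInducing e := isometry_subtype_coe.isUniformInducing
    refine ⟨ContinuousLinearMap.extend K₀c e, ?_⟩
    have hgen3 : ∀ a b c : H, ContinuousLinearMap.extend K₀c e (m (τ a b) c)
        = m (τ (J a) (J b)) (J c) := by
      intro a b c
      have h1 : π (Finsupp.single ((a, b), c) 1) = gen ((a, b), c) := by
        rw [hπdef]
        simp [Finsupp.linearCombination_single]
      have h2 : m (τ a b) c = e ⟨π (Finsupp.single ((a, b), c) 1),
          LinearMap.mem_range_self π _⟩ := by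
        rw [hedef]
        simp only [Submodule.subtypeL_apply]
        rw [h1]
      rw [h2, ContinuousLinearMap.extend_eq K₀c hdense huind]
      have h3 : K₀c ⟨π (Finsupp.single ((a, b), c) 1), LinearMap.mem_range_self π _⟩
          = ψfun (Finsupp.single ((a, b), c) 1) := hK₀ _ _
      rw [h3, hψdef]
      simp only []
      rw [Finsupp.sum_single_index (by simp)]
      simp [hkgendef]
    intro w c
    set KK := ContinuousLinearMap.extend K₀c e with hKKdef
    have hz := dense_zero cj _ hτdense (fun w : H2 => KK (m w c) - m (JJ w) (J c))
      ((KK.continuous.comp (m.flip c).continuous).sub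
        ((m.flip (J c)).continuous.comp hJJcont))
      (fun w1 w2 => by
        show KK (m (w1 + w2) c) - m (JJ (w1 + w2)) (J c) = _ + _
        rw [map_add m, ContinuousLinearMap.add_apply, map_add KK, hJJadd, map_add m,
          ContinuousLinearMap.add_apply]
        abel)
      (fun c' w => by
        show KK (m (c' • w) c) - m (JJ (c' • w)) (J c) = cj c' • _
        rw [map_smul m, ContinuousLinearMap.smul_apply, ContinuousLinearMap.map_smulₛₗ KK,
          hJJsmul, map_smul m, ContinuousLinearMap.smul_apply, smul_sub])
      (by rintro z ⟨q, rfl⟩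
          show KK (m (τ q.1 q.2) c) - m (JJ (τ q.1 q.2)) (J c) = 0
          rw [hgen3, hJJtmul, sub_self])
    exact sub_eq_zero.mp (hz w)
  have hcjcj : ∀ z : ℂ, cj (cj z) = z := fun z => by rw [hcj]; exact Complex.conj_conj z
  have hKm' : ∀ (a : H) (v : H2), K (m' a v) = m' (J a) (JJ v) := by
    intro a v
    have hz := dense_zero cj _ hτdense (fun v : H2 => K (m' a v) - m' (J a) (JJ v))
      ((K.continuous.comp (m' a).continuous).sub ((m' (J a)).continuous.comp hJJcont))
      (fun v1 v2 => by
        show K (m' a (v1 + v2)) - m' (J a) (JJ (v1 + v2)) = _ + _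
        rw [map_add (m' a), map_add K, hJJadd, map_add (m' (J a))]
        abel)
      (fun c v => by
        show K (m' a (c • v)) - m' (J a) (JJ (c • v)) = cj c • _
        rw [map_smul (m' a), ContinuousLinearMap.map_smulₛₗ K, hJJsmul, map_smul (m' (J a)),
          smul_sub])
      (by rintro z ⟨q, rfl⟩
          show K (m' a (τ q.1 q.2)) - m' (J a) (JJ (τ q.1 q.2)) = 0
          rw [← hmm', hK, hJJtmul, hmm', hJJtmul, sub_self])
    exact sub_eq_zero.mp (hz v)
  have hKK : ∀ x : H3, K (K x) = x := by
    have hz := dense_zero (RingHom.id ℂ) _ hmdense (fun x : H3 => K (K x) - x)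
      ((K.continuous.comp K.continuous).sub continuous_id)
      (fun x y => by
        show K (K (x + y)) - (x + y) = _ + _
        rw [map_add K, map_add K]
        abel)
      (fun c x => by
        show K (K (c • x)) - c • x = (RingHom.id ℂ) c • (K (K x) - x)
        rw [ContinuousLinearMap.map_smulₛₗ K, ContinuousLinearMap.map_smulₛₗ K, hcjcj,
          RingHom.id_apply, smul_sub])
      (by rintro z ⟨q, rfl⟩
          show K (K (m (τ q.1.1 q.1.2) q.2)) - m (τ q.1.1 q.1.2) q.2 = 0
          rw [hK, hK, hJJinv, hJinv, sub_self])
    intro x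
    exact sub_eq_zero.mp (hz x)
  -- the operator g2 = 1 ⊗ (Jh ∘ J) on H2 and Q = leg23 g2
  obtain ⟨g2, hg2⟩ : ∃ g2 : H2 →L[ℂ] H2, ∀ x, g2 x = JJh (JJ x) := by
    refine ⟨LinearMap.mkContinuous
      { toFun := fun x => JJh (JJ x)
        map_add' := fun x y => by
          show JJh (JJ (x + y)) = JJh (JJ x) + JJh (JJ y)
          rw [hJJadd, hJJhadd]
        map_smul' := fun c x => by
          show JJh (JJ (c • x)) = (RingHom.id ℂ) c • JJh (JJ x)
          rw [hJJsmul, hJJhsmul, hcjcj]; rfl }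
      1 (fun x => le_of_eq (show ‖JJh (JJ x)‖ = 1 * ‖x‖ by rw [hJJhnorm, hJJnorm, one_mul])),
      fun x => rfl⟩
  have hQ : ∀ (w : H2) (c : H), leg23 g2 (m w c) = m w (Jh (J c)) := by
    intro w c
    have hz := dense_zero (RingHom.id ℂ) _ hτdense
      (fun w : H2 => leg23 g2 (m w c) - m w (Jh (J c)))
      (((leg23 g2).continuous.comp (m.flip c).continuous).sub (m.flip (Jh (J c))).continuous)
      (fun w1 w2 => by
        show leg23 g2 (m (w1 + w2) c) - m (w1 + w2) (Jh (J c)) = _ + _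
        simp only [map_add, ContinuousLinearMap.add_apply]
        abel)
      (fun c' w => by
        show leg23 g2 (m (c' • w) c) - m (c' • w) (Jh (J c)) = (RingHom.id ℂ) c' • _
        simp only [map_smul, ContinuousLinearMap.smul_apply, RingHom.id_apply, smul_sub])
      (by rintro z ⟨q, rfl⟩
          show leg23 g2 (m (τ q.1 q.2) c) - m (τ q.1 q.2) (Jh (J c)) = 0
          rw [hleg23gen, hg2, hJJtmul, hJJhtmul, hJinv, hmm', sub_self])
    exact sub_eq_zero.mp (hz w)
  -- K' = (1 ⊗ 1 ⊗ (Jh ∘ J)) ∘ K, the conjugation J ⊗ J ⊗ Jh on H3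
  set K' : H3 → H3 := fun x => leg23 g2 (K x) with hK'def
  have hK'cont : Continuous K' := (leg23 g2).continuous.comp K.continuous
  have hK' : ∀ (w : H2) (c : H), K' (m w c) = m (JJ w) (Jh c) := by
    intro w c
    show leg23 g2 (K (m w c)) = m (JJ w) (Jh c)
    rw [hK, hQ, hJinv]
  have hK'smul : ∀ (c : ℂ) (x : H3), K' (c • x) = cj c • K' x := by
    intro c x
    show leg23 g2 (K (c • x)) = cj c • leg23 g2 (K x)
    rw [ContinuousLinearMap.map_smulₛₗ K, map_smul (leg23 g2)]
  have hK'm' : ∀ (a : H) (v : H2), K' (m' a v) = m' (J a) (JJh v) := by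
    intro a v
    have hz := dense_zero cj _ hτdense (fun v : H2 => K' (m' a v) - m' (J a) (JJh v))
      ((hK'cont.comp (m' a).continuous).sub
        ((m' (J a)).continuous.comp (conj_cont hJJhadd hJJhsmul hJJhnorm)))
      (fun v1 v2 => by
        show K' (m' a (v1 + v2)) - m' (J a) (JJh (v1 + v2)) = _ + _
        show leg23 g2 (K (m' a (v1 + v2))) - m' (J a) (JJh (v1 + v2)) = _ + _
        rw [map_add (m' a), map_add K, map_add (leg23 g2), hJJhadd, map_add (m' (J a))]
        abel)
      (fun c v => by
        show K' (m' a (c • v)) - m' (J a) (JJh (c • v)) = cj c • _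
        show leg23 g2 (K (m' a (c • v))) - m' (J a) (JJh (c • v)) = cj c • _
        rw [map_smul (m' a), ContinuousLinearMap.map_smulₛₗ K, map_smul (leg23 g2), hJJhsmul,
          map_smul (m' (J a)), smul_sub])
      (by rintro z ⟨q, rfl⟩
          show K' (m' a (τ q.1 q.2)) - m' (J a) (JJh (τ q.1 q.2)) = 0
          rw [← hmm', hK', hJJtmul, hmm', hJJhtmul, sub_self])
    exact sub_eq_zero.mp (hz v)
  have hK'K' : ∀ x : H3, K' (K' x) = x := by
    have hz := dense_zero (RingHom.id ℂ) _ hmdense (fun x : H3 => K' (K' x) - x)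
      ((hK'cont.comp hK'cont).sub continuous_id)
      (fun x y => by
        show K' (K' (x + y)) - (x + y) = _ + _
        show leg23 g2 (K (K' (x + y))) - (x + y) = _ + _
        show leg23 g2 (K (leg23 g2 (K (x + y)))) - (x + y) = _ + _
        rw [map_add K, map_add (leg23 g2), map_add K, map_add (leg23 g2)]
        abel)
      (fun c x => by
        show K' (K' (c • x)) - c • x = (RingHom.id ℂ) c • (K' (K' x) - x)
        rw [hK'smul, hK'smul, hcjcj, RingHom.id_apply, smul_sub])
      (by rintro z ⟨q, rfl⟩
          show K' (K' (m (τ q.1.1 q.1.2) q.2)) - m (τ q.1.1 q.1.2) q.2 = 0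
          rw [hK', hK', hJJinv, hJhinv, sub_self])
    intro x
    exact sub_eq_zero.mp (hz x)
  -- transfer identities for K
  have hKW12 : ∀ x : H3, leg12 W (K x) = K (leg12 W' x) := by
    have hz := dense_zero cj _ hmdense
      (fun x : H3 => leg12 W (K x) - K (leg12 W' x))
      (((leg12 W).continuous.comp K.continuous).sub
        (K.continuous.comp (leg12 W').continuous))
      (fun x y => by
        show leg12 W (K (x + y)) - K (leg12 W' (x + y)) = _ + _
        simp only [map_add]
        abel)
      (fun c x => by
        show leg12 W (K (c • x)) - K (leg12 W' (c • x)) = cj c • _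
        simp only [ContinuousLinearMap.map_smulₛₗ, map_smul, hK'smul, RingHom.id_apply,
          smul_sub])
      (by rintro z ⟨q, rfl⟩
          show leg12 W (K (m (τ q.1.1 q.1.2) q.2)) - K (leg12 W' (m (τ q.1.1 q.1.2) q.2)) = 0
          rw [hK, hleg12, hleg12, hK, hW', hJJinv, sub_self])
    intro x
    exact sub_eq_zero.mp (hz x)
  have hKW23 : ∀ x : H3, leg23 W (K x) = K (leg23 W' x) := by
    have hz := dense_zero cj _ hmdense
      (fun x : H3 => leg23 W (K x) - K (leg23 W' x))
      (((leg23 W).continuous.comp K.continuous).sub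
        (K.continuous.comp (leg23 W').continuous))
      (fun x y => by
        show leg23 W (K (x + y)) - K (leg23 W' (x + y)) = _ + _
        simp only [map_add]
        abel)
      (fun c x => by
        show leg23 W (K (c • x)) - K (leg23 W' (c • x)) = cj c • _
        simp only [ContinuousLinearMap.map_smulₛₗ, map_smul, hK'smul, RingHom.id_apply,
          smul_sub])
      (by rintro z ⟨q, rfl⟩
          show leg23 W (K (m (τ q.1.1 q.1.2) q.2)) - K (leg23 W' (m (τ q.1.1 q.1.2) q.2)) = 0
          rw [hK, hJJtmul, hmm', hleg23, hmm' q.1.1 q.1.2 q.2, hleg23, hKm', hW', hJJinv,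
            hJJtmul, sub_self])
    intro x
    exact sub_eq_zero.mp (hz x)
  have hKSg : ∀ x : H3, leg12 Sg (K x) = K (leg12 Sg x) := by
    have hz := dense_zero cj _ hmdense
      (fun x : H3 => leg12 Sg (K x) - K (leg12 Sg x))
      (((leg12 Sg).continuous.comp K.continuous).sub
        (K.continuous.comp (leg12 Sg).continuous))
      (fun x y => by
        show leg12 Sg (K (x + y)) - K (leg12 Sg (x + y)) = _ + _
        simp only [map_add]
        abel)
      (fun c x => by
        show leg12 Sg (K (c • x)) - K (leg12 Sg (c • x)) = cj c • _
        simp only [ContinuousLinearMap.map_smulₛₗ, map_smul, hK'smul, RingHom.id_apply,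
          smul_sub])
      (by rintro z ⟨q, rfl⟩
          show leg12 Sg (K (m (τ q.1.1 q.1.2) q.2)) - K (leg12 Sg (m (τ q.1.1 q.1.2) q.2)) = 0
          rw [hK, hJJtmul, hleg12, hSg, hleg12, hSg, hK, hJJtmul, sub_self])
    intro x
    exact sub_eq_zero.mp (hz x)
  have hKW13 : ∀ x : H3, leg13 W (K x) = K (leg13 W' x) := by
    intro x
    rw [hleg13, hleg13]
    simp only [ContinuousLinearMap.mul_apply]
    rw [hKSg, hKW23, hKSg]
  -- transfer identities for K'
  have hK'W12 : ∀ x : H3, leg12 W (K' x) = K' (leg12 W' x) := by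
    have hz := dense_zero cj _ hmdense
      (fun x : H3 => leg12 W (K' x) - K' (leg12 W' x))
      (((leg12 W).continuous.comp hK'cont).sub (hK'cont.comp (leg12 W').continuous))
      (fun x y => by
        show leg12 W (K' (x + y)) - K' (leg12 W' (x + y)) = _ + _
        show leg12 W (leg23 g2 (K (x + y))) - leg23 g2 (K (leg12 W' (x + y))) = _ + _
        simp only [map_add]
        abel)
      (fun c x => by
        show leg12 W (K' (c • x)) - K' (leg12 W' (c • x)) = cj c • _
        simp only [ContinuousLinearMap.map_smulₛₗ, map_smul, hK'smul, RingHom.id_apply,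
          smul_sub])
      (by rintro z ⟨q, rfl⟩
          show leg12 W (K' (m (τ q.1.1 q.1.2) q.2)) - K' (leg12 W' (m (τ q.1.1 q.1.2) q.2)) = 0
          rw [hK', hleg12, hleg12, hK', hW', hJJinv, sub_self])
    intro x
    exact sub_eq_zero.mp (hz x)
  have hK'W23 : ∀ x : H3, leg23 W (K' x) = K' (leg23 W'' x) := by
    have hz := dense_zero cj _ hmdense
      (fun x : H3 => leg23 W (K' x) - K' (leg23 W'' x))
      (((leg23 W).continuous.comp hK'cont).sub (hK'cont.comp (leg23 W'').continuous))
      (fun x y => by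
        show leg23 W (K' (x + y)) - K' (leg23 W'' (x + y)) = _ + _
        show leg23 W (leg23 g2 (K (x + y))) - leg23 g2 (K (leg23 W'' (x + y))) = _ + _
        simp only [map_add]
        abel)
      (fun c x => by
        show leg23 W (K' (c • x)) - K' (leg23 W'' (c • x)) = cj c • _
        simp only [ContinuousLinearMap.map_smulₛₗ, map_smul, hK'smul, RingHom.id_apply,
          smul_sub])
      (by rintro z ⟨q, rfl⟩
          show leg23 W (K' (m (τ q.1.1 q.1.2) q.2)) - K' (leg23 W'' (m (τ q.1.1 q.1.2) q.2)) = 0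
          rw [hK', hJJtmul, hmm', hleg23, hmm' q.1.1 q.1.2 q.2, hleg23, hK'm', hW'', hJJhinv,
            hJJhtmul, sub_self])
    intro x
    exact sub_eq_zero.mp (hz x)
  have hK'Sg : ∀ x : H3, leg12 Sg (K' x) = K' (leg12 Sg x) := by
    have hz := dense_zero cj _ hmdense
      (fun x : H3 => leg12 Sg (K' x) - K' (leg12 Sg x))
      (((leg12 Sg).continuous.comp hK'cont).sub (hK'cont.comp (leg12 Sg).continuous))
      (fun x y => by
        show leg12 Sg (K' (x + y)) - K' (leg12 Sg (x + y)) = _ + _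
        show leg12 Sg (leg23 g2 (K (x + y))) - leg23 g2 (K (leg12 Sg (x + y))) = _ + _
        simp only [map_add]
        abel)
      (fun c x => by
        show leg12 Sg (K' (c • x)) - K' (leg12 Sg (c • x)) = cj c • _
        simp only [ContinuousLinearMap.map_smulₛₗ, map_smul, hK'smul, RingHom.id_apply,
          smul_sub])
      (by rintro z ⟨q, rfl⟩
          show leg12 Sg (K' (m (τ q.1.1 q.1.2) q.2)) - K' (leg12 Sg (m (τ q.1.1 q.1.2) q.2)) = 0
          rw [hK', hJJtmul, hleg12, hSg, hleg12, hSg, hK', hJJtmul, sub_self])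
    intro x
    exact sub_eq_zero.mp (hz x)
  have hK'W13 : ∀ x : H3, leg13 W (K' x) = K' (leg13 W'' x) := by
    intro x
    rw [hleg13, hleg13]
    simp only [ContinuousLinearMap.mul_apply]
    rw [hK'Sg, hK'W23, hK'Sg]
  -- the pentagon equation for W' and the mixed pentagon
  have pent' : ∀ x : H3, leg12 W' (leg13 W' (leg23 W' x)) = leg23 W' (leg12 W' x) := by
    intro x
    have h := congrArg (fun T : H3 →L[ℂ] H3 => T (K x)) hPent
    simp only [ContinuousLinearMap.mul_apply] at h
    rw [hKW23, hKW13, hKW12, hKW12, hKW23] at h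
    have h2 := congrArg (fun y => K y) h
    rw [hKK, hKK] at h2
    exact h2
  have pent'' : ∀ x : H3, leg12 W' (leg13 W'' (leg23 W'' x)) = leg23 W'' (leg12 W' x) := by
    intro x
    have h := congrArg (fun T : H3 →L[ℂ] H3 => T (K' x)) hPent
    simp only [ContinuousLinearMap.mul_apply] at h
    rw [hK'W23, hK'W13, hK'W12, hK'W12, hK'W23] at h
    have h2 := congrArg (fun y => K' y) h
    rw [hK'K', hK'K'] at h2
    exact h2
  -- unitarity of the various legs
  have hleg13one : leg13 1 = 1 := by
    rw [hleg13, hleg23one, mul_one, hSS]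
  have u23W_r : star (leg23 W) * leg23 W = 1 := by
    rw [← hleg23star, ← hleg23mul, hWr, hleg23one]
  have u23W_l : leg23 W * star (leg23 W) = 1 := by
    rw [← hleg23star, ← hleg23mul, hWl, hleg23one]
  have u23W'_r : star (leg23 W') * leg23 W' = 1 := by
    rw [← hleg23star, ← hleg23mul, hW'r, hleg23one]
  have u23W'_l : leg23 W' * star (leg23 W') = 1 := by
    rw [← hleg23star, ← hleg23mul, hW'l, hleg23one]
  have u23W''_r : star (leg23 W'') * leg23 W'' = 1 := by
    rw [← hleg23star, ← hleg23mul, hW''r, hleg23one]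
  have u12W'_r : star (leg12 W') * leg12 W' = 1 := by
    rw [← hleg12star, ← hleg12mul, hW'r, hleg12one]
  have u12W'_l : leg12 W' * star (leg12 W') = 1 := by
    rw [← hleg12star, ← hleg12mul, hW'l, hleg12one]
  have u13W'_r : star (leg13 W') * leg13 W' = 1 := by
    rw [hleg13star, hleg13mul, hW'r, hleg13one]
  have u13W''_r : star (leg13 W'') * leg13 W'' = 1 := by
    rw [hleg13star, hleg13mul, hW''r, hleg13one]
  -- pointwise versions
  have appOf : ∀ A B : H3 →L[ℂ] H3, A * B = 1 → ∀ z, A (B z) = z := by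
    intro A B h z
    have := congrArg (fun T : H3 →L[ℂ] H3 => T z) h
    simpa using this
  have iso23W : ∀ z, ‖leg23 W z‖ = ‖z‖ := hiso _ u23W_r
  have iso23W' : ∀ z, ‖leg23 W' z‖ = ‖z‖ := hiso _ u23W'_r
  have iso23W'' : ∀ z, ‖leg23 W'' z‖ = ‖z‖ := hiso _ u23W''_r
  have iso13W' : ∀ z, ‖leg13 W' z‖ = ‖z‖ := hiso _ u13W'_r
  have iso13W'' : ∀ z, ‖leg13 W'' z‖ = ‖z‖ := hiso _ u13W''_r
  have isoPst : ∀ z, ‖star (leg12 W') z‖ = ‖z‖ := by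
    apply hiso
    rw [star_star]
    exact u12W'_l
  -- commutation of leg13 Λ with star (leg12 W')
  have hTPz : ∀ z, leg13 Λ (leg12 W' z) = leg12 W' (leg13 Λ z) := by
    intro z
    have := congrArg (fun T : H3 →L[ℂ] H3 => T z) hΛcomm
    simpa using this
  have hTPst : ∀ z, leg13 Λ (star (leg12 W') z) = star (leg12 W') (leg13 Λ z) := by
    intro z
    calc leg13 Λ (star (leg12 W') z)
        = star (leg12 W') (leg12 W' (leg13 Λ (star (leg12 W') z))) :=
          (appOf _ _ u12W'_r _).symm
      _ = star (leg12 W') (leg13 Λ (leg12 W' (star (leg12 W') z))) := by rw [hTPz]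
      _ = star (leg12 W') (leg13 Λ z) := by rw [appOf _ _ u12W'_l]
  have claim1 : ∀ z : H3, (inner ℂ (leg13 Λ (star (leg12 W') z)) (star (leg12 W') z) : ℂ)
      = inner ℂ (leg13 Λ z) z := by
    intro z
    rw [hTPst, ContinuousLinearMap.star_eq_adjoint, ContinuousLinearMap.adjoint_inner_left]
    rw [← ContinuousLinearMap.star_eq_adjoint, appOf _ _ u12W'_l]
  -- the norm of u
  have hnu : ‖u‖ = 1 := by
    have hi : (inner ℂ (m (τ ζ ξ) η) (m (τ ζ ξ) η) : ℂ) = 1 := by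
      rw [hminner, hτinner, inner_self_eq_norm_sq_to_K, inner_self_eq_norm_sq_to_K,
        inner_self_eq_norm_sq_to_K, hζ, hξ, hη]
      norm_num
    rw [hu, norm_eq_sqrt_re_inner (𝕜 := ℂ), hi]
    simp
  -- consequences of the two pentagons
  have hA1B1 : ∀ z, leg13 W'' (leg23 W'' (star (leg12 W') z))
      = star (leg12 W') (leg23 W'' z) := by
    intro z
    have h1 := pent'' (star (leg12 W') z)
    rw [appOf _ _ u12W'_l z] at h1
    calc leg13 W'' (leg23 W'' (star (leg12 W') z))
        = star (leg12 W') (leg12 W' (leg13 W'' (leg23 W'' (star (leg12 W') z)))) :=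
          (appOf _ _ u12W'_r _).symm
      _ = star (leg12 W') (leg23 W'' z) := by rw [h1]
  have hA2W' : ∀ z, leg13 W' (leg23 W' z)
      = star (leg12 W') (leg23 W' (leg12 W' z)) := by
    intro z
    have h1 := pent' z
    calc leg13 W' (leg23 W' z)
        = star (leg12 W') (leg12 W' (leg13 W' (leg23 W' z))) := (appOf _ _ u12W'_r _).symm
      _ = star (leg12 W') (leg23 W' (leg12 W' z)) := by rw [h1]
  have hcommz : ∀ z, leg23 W'' (leg13 W' z) = leg13 W' (leg23 W'' z) := by
    intro z
    have := congrArg (fun T : H3 →L[ℂ] H3 => T z) hcomm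
    simpa using this
  -- the three elementary distances
  have d1 : ‖leg13 W'' (leg23 W'' (leg13 W' (leg23 W u)))
      - leg13 W'' (leg23 W'' (leg13 W' (leg23 W' u)))‖
      = ‖star (leg23 W') (leg23 W u) - u‖ := by
    rw [← map_sub, ← map_sub, ← map_sub, iso13W'', iso23W'', iso13W']
    have hd : leg23 W u - leg23 W' u = leg23 W' (star (leg23 W') (leg23 W u) - u) := by
      rw [map_sub, appOf _ _ u23W'_l]
    rw [hd, iso23W']
  have d2 : ‖leg13 W'' (leg23 W'' (star (leg12 W') (leg23 W' (leg12 W' u))))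
      - leg13 W'' (leg23 W'' (star (leg12 W') (leg23 W' u)))‖
      = ‖leg12 W' u - u‖ := by
    rw [← map_sub, ← map_sub, ← map_sub, ← map_sub, iso13W'', iso23W'', isoPst, iso23W']
  have d3 : ‖leg13 W'' (leg23 W'' (star (leg12 W') (leg23 W' u)))
      - leg13 W'' (leg23 W'' (star (leg12 W') (leg23 W u)))‖
      = ‖star (leg23 W) (leg23 W' u) - u‖ := by
    rw [← map_sub, ← map_sub, ← map_sub, iso13W'', iso23W'', isoPst]
    have hd : leg23 W' u - leg23 W u = leg23 W (star (leg23 W) (leg23 W' u) - u) := by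
      rw [map_sub, appOf _ _ u23W_l]
    rw [hd, iso23W]
  -- the approximation
  have hvw : ‖leg13 W'' (leg13 W' (leg23 W'' (leg23 W u)))
      - star (leg12 W') (leg23 W'' (leg23 W u))‖
      ≤ ‖star (leg23 W') (leg23 W u) - u‖ + ‖leg12 W' u - u‖
        + ‖star (leg23 W) (leg23 W' u) - u‖ := by
    have split : leg13 W'' (leg13 W' (leg23 W'' (leg23 W u)))
        - star (leg12 W') (leg23 W'' (leg23 W u))
        = (leg13 W'' (leg23 W'' (leg13 W' (leg23 W u)))
            - leg13 W'' (leg23 W'' (leg13 W' (leg23 W' u))))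
          + (leg13 W'' (leg23 W'' (star (leg12 W') (leg23 W' (leg12 W' u))))
            - leg13 W'' (leg23 W'' (star (leg12 W') (leg23 W' u))))
          + (leg13 W'' (leg23 W'' (star (leg12 W') (leg23 W' u)))
            - leg13 W'' (leg23 W'' (star (leg12 W') (leg23 W u)))) := by
      rw [← hcommz (leg23 W u), ← hA2W' u, hA1B1 (leg23 W u)]
      abel
    rw [split]
    calc ‖_ + _ + _‖ ≤ ‖_ + _‖ + ‖_‖ := norm_add_le _ _
      _ ≤ ‖_‖ + ‖_‖ + ‖_‖ := by
          apply add_le_add_left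
          exact norm_add_le _ _
      _ = _ := by rw [d1, d2, d3]
  -- norms of the two vectors
  have hv1 : ‖leg13 W'' (leg13 W' (leg23 W'' (leg23 W u)))‖ = 1 := by
    rw [iso13W'', iso13W', iso23W'', iso23W, hnu]
  have hw1 : ‖star (leg12 W') (leg23 W'' (leg23 W u))‖ = 1 := by
    rw [isoPst, iso23W'', iso23W, hnu]
  -- final assembly
  simp only [ContinuousLinearMap.mul_apply]
  set T := leg13 Λ with hT
  set v := leg13 W'' (leg13 W' (leg23 W'' (leg23 W u))) with hv
  set vB := leg23 W'' (leg23 W u) with hvB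
  set w := star (leg12 W') vB with hwdef
  have key : (inner ℂ (T v) v : ℂ) - inner ℂ (T vB) vB
      = inner ℂ (T (v - w)) v + inner ℂ (T w) (v - w) := by
    have c1 : (inner ℂ (T vB) vB : ℂ) = inner ℂ (T w) w := (claim1 vB).symm
    rw [c1, map_sub, inner_sub_left, inner_sub_right]
    ring
  rw [key]
  have habs : ‖(inner ℂ (T (v - w)) v : ℂ) + inner ℂ (T w) (v - w)‖
      ≤ ‖Λ‖ * ‖v - w‖ + ‖Λ‖ * ‖v - w‖ := by
    calc ‖(inner ℂ (T (v - w)) v : ℂ) + inner ℂ (T w) (v - w)‖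
        ≤ ‖(inner ℂ (T (v - w)) v : ℂ)‖ + ‖(inner ℂ (T w) (v - w) : ℂ)‖ := norm_add_le _ _
      _ ≤ ‖T (v - w)‖ * ‖v‖ + ‖T w‖ * ‖v - w‖ :=
          add_le_add (norm_inner_le_norm _ _) (norm_inner_le_norm _ _)
      _ ≤ ‖Λ‖ * ‖v - w‖ + ‖Λ‖ * ‖v - w‖ := by
          apply add_le_add
          · rw [hv1, mul_one]
            exact hΛ13 _
          · have hb : ‖T w‖ ≤ ‖Λ‖ := by
              have := hΛ13 w
              rwa [hw1, mul_one] at this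
            exact mul_le_mul_of_nonneg_right hb (norm_nonneg _)
  refine le_trans habs ?_
  have hnn : (0 : ℝ) ≤ ‖Λ‖ := norm_nonneg Λ
  nlinarith [hvw, norm_nonneg (v - w)]
end
end
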